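/- arXiv:1702.01960 — 4 statements merged into one kernel-verified Lean document; each statement's English description precedes it below -/
import Mathlib

section
/- For every real a > 0 and complex λ, μ with 0 < Re(μ) < Re(λ), the integral ∫₀^∞ x^{μ-1} (x + a + √(x² + 2ax))^{-λ} dx equals 2λ a^{-λ} (a/2)^μ Γ(2μ) Γ(λ - μ) / Γ(1 + λ + μ). -/
open MeasureTheory Complex

private lemma cpow_pos_eq {r : ℝ} (hr : 0 < r) (w : ℂ) :
    (r : ℂ) ^ w = Complex.exp ((Real.log r : ℂ) * w) := by
  rw [Complex.cpow_def_of_ne_zero (by exact_mod_cast hr.ne'), Complex.ofReal_log hr.le]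

private lemma obh_image {a : ℝ} (ha : 0 < a) :
    (fun s : ℝ => a * (1 - s) ^ 2 / (2 * s)) '' Set.Ioo 0 1 = Set.Ioi 0 := by
  ext x
  constructor
  · rintro ⟨s, hs, rfl⟩
    have h1 : 0 < 1 - s := by linarith [hs.2]
    have h0 := hs.1
    exact Set.mem_Ioi.2 (by positivity)
  · intro hx
    rw [Set.mem_Ioi] at hx
    set w := Real.sqrt (x ^ 2 + 2 * a * x) with hwdef
    have hw0 : 0 ≤ w := Real.sqrt_nonneg _
    have hw : w ^ 2 = x ^ 2 + 2 * a * x := Real.sq_sqrt (by positivity)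
    set y := x + a + w with hydef
    have hy : a < y := by nlinarith
    have hy0 : 0 < y := by linarith
    refine ⟨a / y, ⟨by positivity, (div_lt_one hy0).2 hy⟩, ?_⟩
    field_simp
    rw [hydef]
    linear_combination hw

private lemma obh_inj {a : ℝ} (ha : 0 < a) :
    Set.InjOn (fun s : ℝ => a * (1 - s) ^ 2 / (2 * s)) (Set.Ioo 0 1) := by
  intro s hs t ht hst
  simp only at hst
  have hs0 := hs.1
  have ht0 := ht.1
  have h' : (1 - s) ^ 2 * t = (1 - t) ^ 2 * s := by
    have h2 := hst
    field_simp at h2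
    nlinarith [h2]
  have key : (s - t) * (1 - s * t) = 0 := by linear_combination -h'
  rcases mul_eq_zero.1 key with h | h
  · linarith
  · nlinarith [hs.2, ht.2]

private lemma obh_deriv {a : ℝ} {s : ℝ} (hs : s ∈ Set.Ioo (0:ℝ) 1) :
    HasDerivWithinAt (fun s : ℝ => a * (1 - s) ^ 2 / (2 * s))
      (-(a * (1 - s ^ 2) / (2 * s ^ 2))) (Set.Ioo 0 1) s := by
  have hs0 : s ≠ 0 := hs.1.ne'
  have hu : HasDerivAt (fun t : ℝ => a * (1 - t) ^ 2)
      (a * (2 * (1 - s) ^ 1 * -1)) s := by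
    have := ((hasDerivAt_id s).const_sub 1).pow 2
    simpa using (this.const_mul a)
  have hv : HasDerivAt (fun t : ℝ => 2 * t) 2 s := by
    simpa using (hasDerivAt_id s).const_mul 2
  have hd := hu.div hv (by positivity : (2:ℝ) * s ≠ 0)
  have : (a * (2 * (1 - s) ^ 1 * -1) * (2 * s) - a * (1 - s) ^ 2 * 2) / (2 * s) ^ 2
      = -(a * (1 - s ^ 2) / (2 * s ^ 2)) := by
    field_simp
    ring
  rw [this] at hd
  exact hd.hasDerivWithinAt

theorem oberhettinger_integral (a : ℝ) (ha : 0 < a) (l m : ℂ)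
    (hm : 0 < m.re) (hlm : m.re < l.re) :
    ∫ x in Set.Ioi (0 : ℝ),
        (x : ℂ) ^ (m - 1) *
          ((x + a + Real.sqrt (x ^ 2 + 2 * a * x) : ℝ) : ℂ) ^ (-l) =
      2 * l * (a : ℂ) ^ (-l) * ((a : ℂ) / 2) ^ m * Complex.Gamma (2 * m) *
        Complex.Gamma (l - m) / Complex.Gamma (1 + l + m) := by
  rw [← obh_image ha, integral_image_eq_integral_abs_deriv_smul measurableSet_Ioo
      (fun s hs => obh_deriv hs) (obh_inj ha)]
  rw [setIntegral_congr_fun measurableSet_Ioo (g := fun s : ℝ =>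
      (((a/2 : ℝ) : ℂ) ^ m * ((a : ℝ) : ℂ) ^ (-l)) *
        ((s : ℂ) ^ (l - m - 1) * ((1 - s : ℝ) : ℂ) ^ (2 * m - 1) * (1 + (s : ℂ)))) ?_]
  have h2m : (0:ℝ) < (2*m).re := by
    have : (2*m).re = 2*m.re := by simp [Complex.mul_re]
    rw [this]; linarith
  have hlm' : (0:ℝ) < (l-m).re := by simp [Complex.sub_re]; linarith
  have hlm1' : (0:ℝ) < (l-m+1).re := by simp [Complex.add_re, Complex.sub_re]; linarith
  have hlmp : (0:ℝ) < (l+m).re := by simp [Complex.add_re]; linarith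
  have hlm0 : l - m ≠ 0 := fun h => by rw [h] at hlm'; simp at hlm'
  have hlmp0 : l + m ≠ 0 := fun h => by rw [h] at hlmp; simp at hlmp
  have hGp : Complex.Gamma (l+m) ≠ 0 := Complex.Gamma_ne_zero_of_re_pos hlmp
  have hb1 := Complex.betaIntegral_convergent hlm' h2m
  have hb2 := Complex.betaIntegral_convergent hlm1' h2m
  have key : ∫ s in Set.Ioo (0:ℝ) 1,
      (s : ℂ) ^ (l - m - 1) * ((1 - s : ℝ) : ℂ) ^ (2 * m - 1) * (1 + (s : ℂ))
      = Complex.betaIntegral (l-m) (2*m) + Complex.betaIntegral (l-m+1) (2*m) := by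
    have i1 : IntegrableOn (fun x : ℝ => (x:ℂ)^(l-m-1) * (1-(x:ℂ))^(2*m-1)) (Set.Ioo 0 1) volume :=
      hb1.1.mono_set Set.Ioo_subset_Ioc_self
    have i2 : IntegrableOn (fun x : ℝ => (x:ℂ)^(l-m+1-1) * (1-(x:ℂ))^(2*m-1)) (Set.Ioo 0 1) volume :=
      hb2.1.mono_set Set.Ioo_subset_Ioc_self
    rw [setIntegral_congr_fun measurableSet_Ioo (g := fun x : ℝ =>
        (x:ℂ)^(l-m-1) * (1-(x:ℂ))^(2*m-1) + (x:ℂ)^(l-m+1-1) * (1-(x:ℂ))^(2*m-1)) ?_,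
      MeasureTheory.integral_add i1 i2, Complex.betaIntegral, Complex.betaIntegral,
      intervalIntegral.integral_of_le zero_le_one, intervalIntegral.integral_of_le zero_le_one,
      MeasureTheory.integral_Ioc_eq_integral_Ioo, MeasureTheory.integral_Ioc_eq_integral_Ioo]
    intro x hx
    have hx0 : (x:ℂ) ≠ 0 := Complex.ofReal_ne_zero.2 hx.1.ne'
    simp only []
    have hpow : (x:ℂ)^(l-m+1-1) = (x:ℂ)^(l-m-1) * x := by
      rw [show l-m+1-1 = (l-m-1) + 1 by ring, Complex.cpow_add _ _ hx0, Complex.cpow_one]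
    rw [hpow]
    push_cast
    ring
  rw [MeasureTheory.integral_const_mul, key]
  have hbeta1 : Complex.betaIntegral (l-m) (2*m)
      = Complex.Gamma (l-m) * Complex.Gamma (2*m) / Complex.Gamma (l+m) := by
    have h := Complex.Gamma_mul_Gamma_eq_betaIntegral hlm' h2m
    rw [show (l-m) + 2*m = l + m by ring] at h
    rw [eq_div_iff hGp]
    linear_combination -h
  have hbeta2 : Complex.betaIntegral (l-m+1) (2*m)
      = (l-m) * Complex.Gamma (l-m) * Complex.Gamma (2*m) / ((l+m) * Complex.Gamma (l+m)) := by
    have h := Complex.Gamma_mul_Gamma_eq_betaIntegral hlm1' h2m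
    rw [show (l-m+1) + 2*m = (l+m) + 1 by ring, Complex.Gamma_add_one _ hlmp0,
      Complex.Gamma_add_one _ hlm0] at h
    rw [eq_div_iff (mul_ne_zero hlmp0 hGp)]
    linear_combination -h
  rw [hbeta1, hbeta2, show (1:ℂ) + l + m = (l+m) + 1 by ring,
    Complex.Gamma_add_one _ hlmp0, Complex.ofReal_div, Complex.ofReal_ofNat]
  field_simp
  ring
  intro s hs
  obtain ⟨hs0, hs1⟩ := hs
  have h1s : (0:ℝ) < 1 - s := by linarith
  simp only []
  have h1s2 : (0:ℝ) < 1 - s ^ 2 := by nlinarith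
  have hsq : (a * (1 - s) ^ 2 / (2 * s)) ^ 2 + 2 * a * (a * (1 - s) ^ 2 / (2 * s))
      = (a * (1 - s ^ 2) / (2 * s)) ^ 2 := by field_simp; ring
  have hsqrt : Real.sqrt ((a * (1 - s) ^ 2 / (2 * s)) ^ 2 + 2 * a * (a * (1 - s) ^ 2 / (2 * s)))
      = a * (1 - s ^ 2) / (2 * s) := by rw [hsq]; exact Real.sqrt_sq (by positivity)
  have hsum : a * (1 - s) ^ 2 / (2 * s) + a + a * (1 - s ^ 2) / (2 * s) = a / s := by
    field_simp; ring
  have habs : |(-(a * (1 - s ^ 2) / (2 * s ^ 2)))| = (a/2) * (1 - s) / s ^ 2 * (1 + s) := by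
    rw [abs_neg, abs_of_pos (by positivity)]; ring
  rw [hsqrt, hsum, habs, Complex.real_smul, Complex.ofReal_mul,
    show ((1 + s : ℝ) : ℂ) = 1 + (s:ℂ) by push_cast; ring]
  have hco : ((((a/2) * (1 - s) / s ^ 2 : ℝ)) : ℂ)
      = Complex.exp ((Real.log ((a/2) * (1 - s) / s ^ 2) : ℂ)) := by
    rw [← Real.exp_log (by positivity : (0:ℝ) < (a/2) * (1 - s) / s ^ 2),
      Complex.ofReal_exp, Real.log_exp]
  rw [cpow_pos_eq (show (0:ℝ) < a * (1-s)^2/(2*s) by positivity) (m-1),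
      cpow_pos_eq (show (0:ℝ) < a/s by positivity) (-l),
      cpow_pos_eq (show (0:ℝ) < a/2 by positivity) m,
      cpow_pos_eq ha (-l),
      cpow_pos_eq hs0 (l-m-1),
      cpow_pos_eq h1s (2*m-1),
      hco]
  simp only [← Complex.exp_add]
  rw [mul_right_comm, ← Complex.exp_add, ← mul_assoc, ← Complex.exp_add]
  congr 2
  have e1 : Real.log ((a/2) * (1-s) / s^2) = Real.log (a/2) + Real.log (1-s) - 2 * Real.log s := by
    rw [Real.log_div (by positivity) (by positivity),
      Real.log_mul (by positivity) (by positivity), Real.log_pow]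
    push_cast; ring
  have e2 : Real.log (a * (1-s)^2 / (2*s)) = Real.log (a/2) + 2 * Real.log (1-s) - Real.log s := by
    rw [show a * (1-s)^2 / (2*s) = (a/2) * (1-s)^2 / s by ring,
      Real.log_div (by positivity) (by positivity),
      Real.log_mul (by positivity) (by positivity), Real.log_pow]
    push_cast; ring
  have e3 : Real.log (a/s) = Real.log a - Real.log s := Real.log_div ha.ne' hs0.ne'
  rw [e1, e2, e3]
  push_cast
  ring
end

section
/- For every real a > 0 and complex λ, μ with 0 < Re(μ) < Re(λ), the function x ↦ x^{μ-1} (x + a + √(x² + 2ax))^{-λ} is (absolutely) integrable on (0, ∞). -/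
open MeasureTheory Complex

theorem oberhettinger_integrable (a : ℝ) (ha : 0 < a) (l m : ℂ)
    (hm : 0 < m.re) (hlm : m.re < l.re) :
    IntegrableOn
      (fun x : ℝ =>
        (x : ℂ) ^ (m - 1) *
          ((x + a + Real.sqrt (x ^ 2 + 2 * a * x) : ℝ) : ℂ) ^ (-l))
      (Set.Ioi (0 : ℝ)) := by
  set f := fun x : ℝ =>
    (x : ℂ) ^ (m - 1) * ((x + a + Real.sqrt (x ^ 2 + 2 * a * x) : ℝ) : ℂ) ^ (-l) with hf
  have hBpos : ∀ x : ℝ, 0 < x → 0 < x + a + Real.sqrt (x ^ 2 + 2 * a * x) := by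
    intro x hx
    have := Real.sqrt_nonneg (x ^ 2 + 2 * a * x)
    linarith
  have hcont : ContinuousOn f (Set.Ioi (0 : ℝ)) := by
    intro x hx
    have hx0 : (0 : ℝ) < x := hx
    apply ContinuousAt.continuousWithinAt
    apply ContinuousAt.mul
    · exact continuousAt_ofReal_cpow_const x _ (Or.inr hx0.ne')
    · have hcB : ContinuousAt (fun x : ℝ => x + a + Real.sqrt (x ^ 2 + 2 * a * x)) x := by
        fun_prop
      exact ContinuousAt.comp (x := x)
        (continuousAt_ofReal_cpow_const _ _ (Or.inr (hBpos x hx0).ne')) hcB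
  have hnorm : ∀ x : ℝ, 0 < x →
      ‖f x‖ = x ^ (m.re - 1) * (x + a + Real.sqrt (x ^ 2 + 2 * a * x)) ^ (-l.re) := by
    intro x hx
    rw [hf, norm_mul,
      Complex.norm_cpow_eq_rpow_re_of_pos hx, Complex.norm_cpow_eq_rpow_re_of_pos (hBpos x hx)]
    simp [Complex.sub_re]
  have h1 : IntegrableOn f (Set.Ioc (0 : ℝ) 1) := by
    have hint : IntegrableOn (fun x : ℝ => a ^ (-l.re) * x ^ (m.re - 1)) (Set.Ioc (0 : ℝ) 1) := by
      apply Integrable.const_mul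
      have := (intervalIntegral.intervalIntegrable_rpow' (a := 0) (b := 1)
        (r := m.re - 1) (by linarith))
      rwa [intervalIntegrable_iff_integrableOn_Ioc_of_le (by norm_num)] at this
    refine Integrable.mono' hint
      ((hcont.mono Set.Ioc_subset_Ioi_self).aestronglyMeasurable measurableSet_Ioc) ?_
    filter_upwards [ae_restrict_mem measurableSet_Ioc] with x hx
    rw [hnorm x hx.1]
    rw [mul_comm (a ^ (-l.re))]
    exact mul_le_mul_of_nonneg_left
      (Real.rpow_le_rpow_of_nonpos ha
        (by nlinarith [Real.sqrt_nonneg (x ^ 2 + 2 * a * x), hx.1, ha]) (by linarith))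
      (Real.rpow_nonneg hx.1.le _)
  have h2 : IntegrableOn f (Set.Ioi (1 : ℝ)) := by
    have hint : IntegrableOn (fun x : ℝ => x ^ (m.re - 1 - l.re)) (Set.Ioi (1 : ℝ)) :=
      integrableOn_Ioi_rpow_of_lt (by linarith) one_pos
    refine Integrable.mono' hint
      ((hcont.mono (Set.Ioi_subset_Ioi zero_le_one)).aestronglyMeasurable measurableSet_Ioi) ?_
    filter_upwards [ae_restrict_mem measurableSet_Ioi] with x hx
    have hx0 : (0 : ℝ) < x := lt_trans one_pos hx
    rw [hnorm x hx0]
    calc x ^ (m.re - 1) * (x + a + Real.sqrt (x ^ 2 + 2 * a * x)) ^ (-l.re)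
        ≤ x ^ (m.re - 1) * x ^ (-l.re) :=
          mul_le_mul_of_nonneg_left
            (Real.rpow_le_rpow_of_nonpos hx0
              (by nlinarith [Real.sqrt_nonneg (x ^ 2 + 2 * a * x), hx0, ha]) (by linarith))
            (Real.rpow_nonneg hx0.le _)
      _ = x ^ (m.re - 1 - l.re) := by
          rw [← Real.rpow_add hx0]; ring_nf
  have := h1.union h2
  rwa [Set.Ioc_union_Ioi_eq_Ioi (by norm_num : (0:ℝ) ≤ 1)] at this
end

section
/- For real a > 0, y > 0 and complex b, c, p, λ, μ with 0 < Re(μ) < Re(λ + p) + 1, the integral ∫₀^∞ x^{μ-1} (x + a + √(x² + 2ax))^{-λ} W_{p,b,c}(y / (x + a + √(x² + 2ax))) dx equals Σ_{k=0}^∞ [(-c)^k (y/2)^{2k+p+1} / (Γ(k + 3/2) Γ(k + p + (b+2)/2))] · 2(λ+p+1+2k) a^{-(λ+p+1+2k)} (a/2)^μ Γ(2μ) Γ(λ+p+1+2k-μ) / Γ(1+λ+p+1+2k+μ), i.e., termwise integration of the Struve series against the Oberhettinger kernel is valid and each term is evaluated by the Oberhettinger formula. -/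
open MeasureTheory Complex Filter

/-- The generalized Struve function `W_{p,b,c}(z)`. -/
noncomputable def genStruve (p b c z : ℂ) : ℂ :=
  ∑' k : ℕ, (-c) ^ k * (z / 2) ^ (2 * (k : ℂ) + p + 1) /
    (Complex.Gamma ((k : ℂ) + 3 / 2) * Complex.Gamma ((k : ℂ) + p + (b + 2) / 2))

/-! ### Auxiliary lemmas -/

noncomputable def phi (a : ℝ) (v : ℝ) : ℝ := a/2 * (v⁻¹ - 2 + v)

lemma phi_eq (a : ℝ) {v : ℝ} (hv : v ≠ 0) : phi a v = a * (1-v)^2 / (2*v) := by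
  unfold phi; field_simp; ring_nf

lemma phi_pos {a : ℝ} (ha : 0 < a) {v : ℝ} (hv0 : 0 < v) (hv1 : v < 1) : 0 < phi a v := by
  rw [phi_eq a hv0.ne']
  have h1 : 0 < 1 - v := by linarith
  positivity

lemma phi_image {a : ℝ} (ha : 0 < a) : phi a '' Set.Ioo 0 1 = Set.Ioi 0 := by
  apply Set.eq_of_subset_of_subset
  · rintro _ ⟨v, ⟨hv0, hv1⟩, rfl⟩
    exact Set.mem_Ioi.2 (phi_pos ha hv0 hv1)
  · rintro x hx
    rw [Set.mem_Ioi] at hx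
    set s := Real.sqrt (x^2 + 2*a*x) with hs
    have hsnn : 0 ≤ s := Real.sqrt_nonneg _
    have hssq : s^2 = x^2 + 2*a*x := Real.sq_sqrt (by positivity)
    set u := x + a + s with hu
    have hu0 : 0 < u := by positivity
    have key : (u - a)^2 = 2*x*u := by rw [hu]; linear_combination hssq
    refine ⟨a/u, ⟨by positivity, ?_⟩, ?_⟩
    · rw [div_lt_one hu0]; rw [hu]; linarith
    · unfold phi
      have hane : a ≠ 0 := ha.ne'
      field_simp
      linear_combination key

lemma phi_hasDeriv (a : ℝ) {v : ℝ} (hv : v ≠ 0) :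
    HasDerivAt (phi a) (a/2 * (1 - (v^2)⁻¹)) v := by
  have h := ((hasDerivAt_inv hv).sub_const 2).add (hasDerivAt_id v)
  have h2 := h.const_mul (a/2)
  rw [show a/2 * (1 - (v^2)⁻¹) = a/2 * (-(v^2)⁻¹ + 1) by ring]
  exact h2

lemma phi_injOn {a : ℝ} (ha : 0 < a) : Set.InjOn (phi a) (Set.Ioo 0 1) := by
  have : StrictAntiOn (phi a) (Set.Ioo 0 1) := by
    apply strictAntiOn_of_deriv_neg (convex_Ioo 0 1)
    · apply ContinuousOn.mul continuousOn_const
      apply ContinuousOn.add (ContinuousOn.sub ?_ continuousOn_const) continuousOn_id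
      exact ContinuousOn.inv₀ continuousOn_id (fun x hx => hx.1.ne')
    · intro v hv
      rw [interior_Ioo] at hv
      rw [(phi_hasDeriv a hv.1.ne').deriv]
      have h1 : 1 < (v^2)⁻¹ := by
        have hv2 : 0 < v^2 := pow_pos hv.1 2
        exact (one_lt_inv₀ hv2).2 (by nlinarith [hv.1, hv.2])
      have : (1 : ℝ) - (v^2)⁻¹ < 0 := by linarith
      have ha2 : 0 < a/2 := by linarith
      exact mul_neg_of_pos_of_neg ha2 this
  exact this.injOn

lemma sqrt_phi {a : ℝ} (ha : 0 < a) {v : ℝ} (hv0 : 0 < v) (hv1 : v < 1) :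
    Real.sqrt ((phi a v)^2 + 2*a*(phi a v)) = a*(1-v^2)/(2*v) := by
  have h1 : 0 < 1 - v^2 := by nlinarith
  have e : (phi a v)^2 + 2*a*(phi a v) = (a*(1-v^2)/(2*v))^2 := by
    rw [phi_eq a hv0.ne']; field_simp; ring
  rw [e, Real.sqrt_sq (div_nonneg (mul_nonneg ha.le h1.le) (by linarith))]

lemma u_phi {a : ℝ} (ha : 0 < a) {v : ℝ} (hv0 : 0 < v) (hv1 : v < 1) :
    phi a v + a + Real.sqrt ((phi a v)^2 + 2*a*(phi a v)) = a/v := by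
  rw [sqrt_phi ha hv0 hv1, phi_eq a hv0.ne']
  field_simp; ring

lemma cpow_posReal' {r : ℝ} (hr : 0 < r) (w : ℂ) :
    (r:ℂ) ^ w = Complex.exp (w * Real.log r) := by
  rw [Complex.cpow_def_of_ne_zero (by exact_mod_cast hr.ne'), ← Complex.ofReal_log hr.le,
    mul_comm]

lemma integrand_phi {a : ℝ} (ha : 0 < a) (μ ρ : ℂ) {v : ℝ} (hv0 : 0 < v) (hv1 : v < 1) :
    |a/2 * (1 - (v^2)⁻¹)| • (((phi a v : ℝ):ℂ)^(μ-1) * ((a/v : ℝ):ℂ)^(-ρ))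
     = ((a:ℂ)/2)^μ * (a:ℂ)^(-ρ) *
       ((v:ℂ)^(ρ-μ-1) * ((1-v:ℝ):ℂ)^(2*μ-1) * ((1+v:ℝ):ℂ)) := by
  have h1v : 0 < 1 - v := by linarith
  have h1pv : 0 < 1 + v := by linarith
  have h1v2 : 0 < 1 - v^2 := by nlinarith
  have habs : |a/2 * (1 - (v^2)⁻¹)| = a*(1-v^2)/(2*v^2) := by
    have h : a/2 * (1 - (v^2)⁻¹) = -(a*(1-v^2)/(2*v^2)) := by field_simp; ring
    rw [h, abs_neg, abs_of_pos (by positivity)]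
  have la : Real.log (a*(1-v^2)/(2*v^2))
      = Real.log a + Real.log (1-v) + Real.log (1+v) - Real.log 2 - 2*Real.log v := by
    rw [show a*(1-v^2)/(2*v^2) = a*((1-v)*(1+v))/(2*(v*v)) by ring,
      Real.log_div (mul_pos ha (mul_pos h1v h1pv)).ne' (by positivity),
      Real.log_mul ha.ne' (mul_pos h1v h1pv).ne',
      Real.log_mul h1v.ne' h1pv.ne',
      Real.log_mul two_ne_zero (mul_pos hv0 hv0).ne',
      Real.log_mul hv0.ne' hv0.ne']
    ring
  have lphi : Real.log (phi a v)
      = Real.log a + 2*Real.log (1-v) - Real.log 2 - Real.log v := by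
    rw [phi_eq a hv0.ne',
      Real.log_div (mul_pos ha (pow_pos h1v 2)).ne' (by positivity),
      Real.log_mul ha.ne' (pow_pos h1v 2).ne',
      Real.log_pow,
      Real.log_mul two_ne_zero hv0.ne']
    push_cast; ring
  have lav : Real.log (a/v) = Real.log a - Real.log v := Real.log_div ha.ne' hv0.ne'
  have la2 : Real.log (a/2) = Real.log a - Real.log 2 := Real.log_div ha.ne' two_ne_zero
  have hb1 : ((a:ℂ)/2) = ((a/2 : ℝ):ℂ) := by push_cast; ring
  rw [habs, Complex.real_smul, hb1,
    cpow_posReal' (phi_pos ha hv0 hv1), cpow_posReal' (by positivity : (0:ℝ) < a/v),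
    cpow_posReal' (by positivity : (0:ℝ) < a/2), cpow_posReal' ha,
    cpow_posReal' hv0, cpow_posReal' h1v,
    show ((a*(1-v^2)/(2*v^2) : ℝ):ℂ) = Complex.exp ((Real.log (a*(1-v^2)/(2*v^2)) : ℝ):ℂ) by
      rw [← Complex.ofReal_exp, Real.exp_log (by positivity)],
    show ((1+v : ℝ):ℂ) = Complex.exp ((Real.log (1+v) : ℝ):ℂ) by
      rw [← Complex.ofReal_exp, Real.exp_log h1pv],
    ← Complex.exp_add, ← Complex.exp_add, ← Complex.exp_add, ← Complex.exp_add,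
    ← Complex.exp_add, ← Complex.exp_add]
  congr 1
  rw [la, lphi, lav, la2]
  push_cast
  ring

lemma my_betaIntegral' {u w : ℂ} (hu : 0 < u.re) (hw : 0 < w.re) :
    ∫ v in Set.Ioo (0:ℝ) 1, (v:ℂ)^(u-1)*(1-(v:ℂ))^(w-1)
      = Complex.Gamma u * Complex.Gamma w / Complex.Gamma (u+w) := by
  have h1 : ∫ v in Set.Ioo (0:ℝ) 1, (v:ℂ)^(u-1)*(1-(v:ℂ))^(w-1) = Complex.betaIntegral u w := by
    rw [Complex.betaIntegral, intervalIntegral.integral_of_le zero_le_one,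
      integral_Ioc_eq_integral_Ioo]
  rw [h1, eq_div_iff (Complex.Gamma_ne_zero_of_re_pos (by simp only [Complex.add_re]; linarith)),
    mul_comm]
  exact (Complex.Gamma_mul_Gamma_eq_betaIntegral hu hw).symm

lemma beta_combo {ρ μ : ℂ} (hμ : 0 < μ.re) (hρ : μ.re < ρ.re) :
    ∫ v in Set.Ioo (0:ℝ) 1,
      (v:ℂ) ^ (ρ - μ - 1) * ((1 - v : ℝ):ℂ) ^ (2*μ - 1) * ((1 + v : ℝ):ℂ) =
    2 * ρ * Complex.Gamma (2*μ) * Complex.Gamma (ρ - μ) / Complex.Gamma (1 + ρ + μ) := by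
  have h2μ : 0 < (2*μ).re := by
    simp only [Complex.mul_re, Complex.re_ofNat, Complex.im_ofNat]; nlinarith
  have hρμ : 0 < (ρ-μ).re := by simp only [Complex.sub_re]; linarith
  have hρμ1 : 0 < (ρ-μ+1).re := by
    simp only [Complex.add_re, Complex.sub_re, Complex.one_re]; linarith
  have i1 : IntegrableOn (fun v:ℝ => (v:ℂ)^(ρ-μ-1) * (1-(v:ℂ))^(2*μ-1)) (Set.Ioo 0 1) :=
    (Complex.betaIntegral_convergent hρμ h2μ).1.mono_set Set.Ioo_subset_Ioc_self
  have i2 : IntegrableOn (fun v:ℝ => (v:ℂ)^(ρ-μ+1-1) * (1-(v:ℂ))^(2*μ-1)) (Set.Ioo 0 1) :=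
    (Complex.betaIntegral_convergent hρμ1 h2μ).1.mono_set Set.Ioo_subset_Ioc_self
  have hpt : ∀ v ∈ Set.Ioo (0:ℝ) 1,
      (v:ℂ) ^ (ρ - μ - 1) * ((1 - v : ℝ):ℂ) ^ (2*μ - 1) * ((1 + v : ℝ):ℂ)
        = (v:ℂ)^(ρ-μ-1) * (1-(v:ℂ))^(2*μ-1) + (v:ℂ)^(ρ-μ+1-1) * (1-(v:ℂ))^(2*μ-1) := by
    intro v hv
    have hv0 : (v:ℂ) ≠ 0 := by exact_mod_cast hv.1.ne'
    have e : (v:ℂ)^(ρ-μ+1-1) = (v:ℂ)^(ρ-μ-1) * (v:ℂ) := by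
      rw [show ρ-μ+1-1 = (ρ-μ-1) + 1 by ring, Complex.cpow_add _ _ hv0, Complex.cpow_one]
    push_cast
    rw [e]; ring
  rw [setIntegral_congr_fun measurableSet_Ioo hpt, integral_add i1 i2,
    my_betaIntegral' hρμ h2μ, my_betaIntegral' hρμ1 h2μ]
  have hne1 : ρ - μ ≠ 0 := fun h => by rw [h] at hρμ; simp at hρμ
  have hρμadd : 0 < (ρ+μ).re := by simp only [Complex.add_re]; linarith
  have hne2 : ρ + μ ≠ 0 := fun h => by rw [h] at hρμadd; simp at hρμadd
  have g1 : Complex.Gamma (ρ-μ+1) = (ρ-μ) * Complex.Gamma (ρ-μ) := Complex.Gamma_add_one _ hne1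
  have g2 : Complex.Gamma (1+ρ+μ) = (ρ+μ) * Complex.Gamma (ρ+μ) := by
    rw [show (1:ℂ)+ρ+μ = (ρ+μ)+1 by ring]; exact Complex.Gamma_add_one _ hne2
  have g3 : ρ - μ + (2*μ) = ρ + μ := by ring
  have g4 : ρ - μ + 1 + (2*μ) = 1 + ρ + μ := by ring
  rw [g3, g4, g1, g2]
  have hΓ : Complex.Gamma (ρ+μ) ≠ 0 := Complex.Gamma_ne_zero_of_re_pos hρμadd
  field_simp
  ring

lemma oberhettinger {a : ℝ} (ha : 0 < a) {μ ρ : ℂ} (hμ : 0 < μ.re) (hρ : μ.re < ρ.re) :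
    ∫ x in Set.Ioi (0:ℝ),
        (x:ℂ)^(μ-1) * ((x + a + Real.sqrt (x^2+2*a*x) : ℝ):ℂ)^(-ρ)
    = 2*ρ*(a:ℂ)^(-ρ)*((a:ℂ)/2)^μ * Complex.Gamma (2*μ) * Complex.Gamma (ρ-μ)
        / Complex.Gamma (1+ρ+μ) := by
  rw [← phi_image ha,
    integral_image_eq_integral_abs_deriv_smul measurableSet_Ioo
      (fun v hv => (phi_hasDeriv a hv.1.ne').hasDerivWithinAt) (phi_injOn ha)]
  rw [setIntegral_congr_fun measurableSet_Ioo (g := fun v : ℝ =>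
      ((a:ℂ)/2)^μ * (a:ℂ)^(-ρ) *
        ((v:ℂ)^(ρ-μ-1) * ((1-v:ℝ):ℂ)^(2*μ-1) * ((1+v:ℝ):ℂ)))
    (fun v hv => by
      rw [u_phi ha hv.1 hv.2]
      exact integrand_phi ha μ ρ hv.1 hv.2)]
  rw [MeasureTheory.integral_const_mul, beta_combo hμ hρ]
  ring

noncomputable def scoeff (p b c : ℂ) (y : ℝ) (k : ℕ) : ℂ :=
  (-c) ^ k * ((y:ℂ) / 2) ^ (2 * (k : ℂ) + p + 1) /
    (Complex.Gamma ((k : ℂ) + 3 / 2) * Complex.Gamma ((k : ℂ) + p + (b + 2) / 2))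

lemma summable_scoeff (p b c : ℂ) {y : ℝ} (hy : 0 < y) {β : ℝ} (hβ : 0 ≤ β) :
    Summable (fun k => ‖scoeff p b c y k‖ * β ^ k) := by
  set w : ℂ := p + (b+2)/2 with hw
  clear_value w
  set D : ℝ := ‖(-c) * ((y:ℂ)/2) ^ (2:ℂ)‖ with hD
  have hy2 : ((y:ℂ)/2) ≠ 0 := by
    simp only [ne_eq, div_eq_zero_iff, Complex.ofReal_eq_zero]
    push_neg; exact ⟨hy.ne', two_ne_zero⟩
  apply summable_of_ratio_norm_eventually_le (r := 1/2) (by norm_num)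
  have h1 : ∀ᶠ (k:ℕ) in atTop, (1:ℝ) - w.re ≤ (k:ℝ) :=
    tendsto_natCast_atTop_atTop.eventually (eventually_ge_atTop _)
  have h2 : ∀ᶠ (k:ℕ) in atTop, 2*D*β ≤ (k:ℝ) :=
    tendsto_natCast_atTop_atTop.eventually (eventually_ge_atTop _)
  filter_upwards [h1, h2] with k hk1 hk2
  have hkw_re : (1:ℝ) ≤ ((k:ℂ)+w).re := by
    simp only [Complex.add_re, Complex.natCast_re]; linarith
  have hkw_pos : 0 < ((k:ℂ)+w).re := by linarith
  have hkw_ne : ((k:ℂ)+w) ≠ 0 := fun h => by rw [h] at hkw_pos; simp at hkw_pos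
  have hk32_re : 0 < ((k:ℂ)+3/2).re := by
    simp only [Complex.add_re, Complex.natCast_re]
    have : ((3:ℂ)/2).re = 3/2 := by norm_num
    rw [this]; positivity
  have hk32_ne : ((k:ℂ)+3/2) ≠ 0 := fun h => by rw [h] at hk32_re; simp at hk32_re
  have hΓ32 : Complex.Gamma ((k:ℂ)+3/2) ≠ 0 := Complex.Gamma_ne_zero_of_re_pos hk32_re
  have hΓw : Complex.Gamma ((k:ℂ)+w) ≠ 0 := Complex.Gamma_ne_zero_of_re_pos hkw_pos
  have hrec1 : Complex.Gamma (((k:ℂ)+1)+3/2) = ((k:ℂ)+3/2) * Complex.Gamma ((k:ℂ)+3/2) := by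
    rw [show ((k:ℂ)+1)+3/2 = ((k:ℂ)+3/2)+1 by ring, Complex.Gamma_add_one _ hk32_ne]
  have hrec2 : Complex.Gamma (((k:ℂ)+1)+p+(b+2)/2)
      = ((k:ℂ)+w) * Complex.Gamma ((k:ℂ)+p+(b+2)/2) := by
    rw [show ((k:ℂ)+1)+p+(b+2)/2 = ((k:ℂ)+p+(b+2)/2)+1 by ring,
      Complex.Gamma_add_one _
        (by rw [show (k:ℂ)+p+(b+2)/2 = (k:ℂ)+w by rw [hw]; ring]; exact hkw_ne),
      show (k:ℂ)+p+(b+2)/2 = (k:ℂ)+w by rw [hw]; ring]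
  have hpow : ((y:ℂ)/2) ^ (2*((k:ℂ)+1)+p+1)
      = ((y:ℂ)/2) ^ (2*(k:ℂ)+p+1) * ((y:ℂ)/2) ^ (2:ℂ) := by
    rw [show 2*((k:ℂ)+1)+p+1 = (2*(k:ℂ)+p+1) + 2 by ring, Complex.cpow_add _ _ hy2]
  have E : scoeff p b c y (k+1) * (((k:ℂ)+3/2) * ((k:ℂ)+w))
      = scoeff p b c y k * ((-c) * ((y:ℂ)/2) ^ (2:ℂ)) := by
    unfold scoeff
    push_cast
    rw [hrec1, hrec2, hpow, pow_succ]
    rw [show (k:ℂ)+p+(b+2)/2 = (k:ℂ)+w by rw [hw]; ring]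
    rw [div_mul_eq_mul_div, div_mul_eq_mul_div,
      div_eq_div_iff
        (mul_ne_zero (mul_ne_zero hk32_ne hΓ32) (mul_ne_zero hkw_ne hΓw))
        (mul_ne_zero hΓ32 hΓw)]
    ring
  set A := ‖scoeff p b c y (k+1)‖ with hA
  set B := ‖scoeff p b c y k‖ with hB
  set P := ‖(k:ℂ)+3/2‖ with hP
  set Q := ‖(k:ℂ)+w‖ with hQ
  have hkey : A * (P * Q) = B * D := by
    rw [hA, hB, hP, hQ, hD, ← norm_mul, ← norm_mul, ← norm_mul, E]
  have hQ1 : (1:ℝ) ≤ Q := le_trans hkw_re (Complex.re_le_norm _)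
  have hPk : (k:ℝ) ≤ P := by
    refine le_trans ?_ (Complex.re_le_norm _)
    simp only [Complex.add_re, Complex.natCast_re]
    have : ((3:ℂ)/2).re = 3/2 := by norm_num
    rw [this]; linarith
  have hPpos : 0 < P*Q := by
    have hQ0 : (0:ℝ) < Q := lt_of_lt_of_le one_pos hQ1
    have hP0 : (0:ℝ) < P := by
      by_contra h
      push_neg at h
      have hP0' : P = 0 := le_antisymm h (by rw [hP]; exact norm_nonneg _)
      rw [hP] at hP0'
      exact hk32_ne (norm_eq_zero.mp hP0')
    positivity
  have hDnn : 0 ≤ D := norm_nonneg _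
  have h2DB : 2*D*β ≤ P*Q := by
    nlinarith [mul_nonneg (le_trans (Nat.cast_nonneg k) hPk) (sub_nonneg.2 hQ1)]
  have hBnn : 0 ≤ B := norm_nonneg _
  have hEnn : 0 ≤ β^k := pow_nonneg hβ k
  rw [Real.norm_of_nonneg (by positivity), Real.norm_of_nonneg (by positivity)]
  apply le_of_mul_le_mul_right _ hPpos
  calc A * β^(k+1) * (P*Q) = (B * β^k) * (D*β) := by
        rw [pow_succ]; linear_combination (β^k * β) * hkey
    _ ≤ (B * β^k) * ((1/2)*(P*Q)) := by
        apply mul_le_mul_of_nonneg_left (by linarith) (by positivity)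
    _ = 1/2 * (B * β^k) * (P*Q) := by ring

lemma u_cont (a : ℝ) : Continuous (fun x:ℝ => x + a + Real.sqrt (x^2 + 2*a*x)) := by
  continuity

lemma u_lb {a x : ℝ} (ha : 0 < a) (hx : 0 < x) :
    a ≤ x + a + Real.sqrt (x^2 + 2*a*x) := by
  have := Real.sqrt_nonneg (x^2 + 2*a*x)
  linarith

lemma u_pos {a x : ℝ} (ha : 0 < a) (hx : 0 < x) :
    0 < x + a + Real.sqrt (x^2 + 2*a*x) := lt_of_lt_of_le ha (u_lb ha hx)

lemma integrable_kernel {a : ℝ} (ha : 0 < a) {s r : ℝ} (hs : 0 < s) (hsr : s < r) :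
    IntegrableOn (fun x : ℝ => x ^ (s-1) * (x + a + Real.sqrt (x^2 + 2*a*x)) ^ (-r))
      (Set.Ioi (0:ℝ)) := by
  have hmeas : ∀ t : Set ℝ, t ⊆ Set.Ioi 0 → MeasurableSet t →
      AEStronglyMeasurable (fun x : ℝ => x ^ (s-1) * (x + a + Real.sqrt (x^2 + 2*a*x)) ^ (-r))
        (volume.restrict t) := by
    intro t ht hmt
    apply ContinuousOn.aestronglyMeasurable ?_ hmt
    apply ContinuousOn.mul
    · exact ContinuousOn.rpow_const continuousOn_id
        (fun x hx => Or.inl (ne_of_gt (ht hx)))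
    · exact ContinuousOn.rpow_const ((u_cont a).continuousOn)
        (fun x hx => Or.inl (ne_of_gt (u_pos ha (ht hx))))
  have key : Set.Ioc (0:ℝ) 1 ∪ Set.Ioi 1 = Set.Ioi 0 := Set.Ioc_union_Ioi_eq_Ioi zero_le_one
  rw [← key]
  apply IntegrableOn.union
  · have hg : IntegrableOn (fun x : ℝ => a ^ (-r) * x ^ (s-1)) (Set.Ioc (0:ℝ) 1) := by
      apply Integrable.const_mul
      have := (intervalIntegral.intervalIntegrable_rpow' (a := 0) (b := 1)
        (by linarith : (-1:ℝ) < s - 1)).1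
      exact (by simpa using this : IntegrableOn (fun x : ℝ => x ^ (s-1)) (Set.Ioc 0 1))
    apply Integrable.mono hg
      (hmeas _ Set.Ioc_subset_Ioi_self measurableSet_Ioc)
    filter_upwards [ae_restrict_mem measurableSet_Ioc] with x hx
    have hx0 : 0 < x := hx.1
    have hu := u_pos ha hx0
    rw [Real.norm_of_nonneg (by positivity), Real.norm_of_nonneg (by positivity)]
    rw [mul_comm (a ^ (-r))]
    apply mul_le_mul_of_nonneg_left ?_ (by positivity)
    exact Real.rpow_le_rpow_of_nonpos ha (u_lb ha hx0) (by linarith)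
  · have hg : IntegrableOn (fun x : ℝ => x ^ (s-1-r)) (Set.Ioi (1:ℝ)) :=
      integrableOn_Ioi_rpow_of_lt (by linarith) one_pos
    apply Integrable.mono hg (hmeas _ (fun x hx => show (0:ℝ) < x from lt_trans one_pos hx) measurableSet_Ioi)
    filter_upwards [ae_restrict_mem measurableSet_Ioi] with x hx
    have hx0 : (0:ℝ) < x := lt_trans one_pos hx
    have hu := u_pos ha hx0
    rw [Real.norm_of_nonneg (by positivity), Real.norm_of_nonneg (by positivity)]
    have h1 : (x + a + Real.sqrt (x^2+2*a*x)) ^ (-r) ≤ x ^ (-r) := by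
      apply Real.rpow_le_rpow_of_nonpos hx0 ?_ (by linarith)
      have := Real.sqrt_nonneg (x^2+2*a*x); linarith
    calc x ^ (s-1) * (x + a + Real.sqrt (x^2+2*a*x)) ^ (-r)
        ≤ x ^ (s-1) * x ^ (-r) := mul_le_mul_of_nonneg_left h1 (by positivity)
      _ = x ^ (s-1-r) := by rw [← Real.rpow_add hx0]; ring_nf

theorem integral_genStruve_oberhettinger (a y : ℝ) (ha : 0 < a) (hy : 0 < y)
    (b c p l m : ℂ) (hm : 0 < m.re) (hlm : m.re < (l + p).re + 1) :
    ∫ x in Set.Ioi (0 : ℝ),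
        (x : ℂ) ^ (m - 1) *
          ((x + a + Real.sqrt (x ^ 2 + 2 * a * x) : ℝ) : ℂ) ^ (-l) *
          genStruve p b c ((y : ℂ) / ((x + a + Real.sqrt (x ^ 2 + 2 * a * x) : ℝ) : ℂ)) =
      ∑' k : ℕ,
        ((-c) ^ k * ((y : ℂ) / 2) ^ (2 * (k : ℂ) + p + 1) /
            (Complex.Gamma ((k : ℂ) + 3 / 2) *
              Complex.Gamma ((k : ℂ) + p + (b + 2) / 2))) *
          (2 * (l + p + 1 + 2 * (k : ℂ)) * (a : ℂ) ^ (-(l + p + 1 + 2 * (k : ℂ))) *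
            ((a : ℂ) / 2) ^ m * Complex.Gamma (2 * m) *
            Complex.Gamma (l + p + 1 + 2 * (k : ℂ) - m) /
            Complex.Gamma (1 + (l + p + 1 + 2 * (k : ℂ)) + m)) := by
  -- notation
  set F : ℕ → ℝ → ℂ := fun k x => scoeff p b c y k *
    ((x:ℂ)^(m-1) * ((x + a + Real.sqrt (x^2 + 2*a*x) : ℝ):ℂ)^(-(l+p+1+2*(k:ℂ)))) with hF
  -- Step A : rewrite the integrand as a tsum
  have stepA : ∀ x ∈ Set.Ioi (0:ℝ),
      (x : ℂ) ^ (m - 1) *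
          ((x + a + Real.sqrt (x ^ 2 + 2 * a * x) : ℝ) : ℂ) ^ (-l) *
          genStruve p b c ((y : ℂ) / ((x + a + Real.sqrt (x ^ 2 + 2 * a * x) : ℝ) : ℂ))
        = ∑' k : ℕ, F k x := by
    intro x hx
    rw [Set.mem_Ioi] at hx
    have hU : 0 < x + a + Real.sqrt (x^2 + 2*a*x) := u_pos ha hx
    set U : ℝ := x + a + Real.sqrt (x^2 + 2*a*x) with hUdef
    have hUne : (U:ℂ) ≠ 0 := by exact_mod_cast hU.ne'
    unfold genStruve
    rw [← tsum_mul_left]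
    apply tsum_congr
    intro k
    have hbase : ((y:ℂ)/(U:ℂ))/2 = ((y/2 : ℝ):ℂ) * ((U⁻¹ : ℝ):ℂ) := by
      push_cast
      field_simp
    have harg : (Complex.ofReal U).arg ≠ Real.pi := by
      rw [Complex.arg_ofReal_of_nonneg hU.le]
      exact Real.pi_ne_zero.symm
    have hsplit : (((y/2 : ℝ):ℂ) * ((U⁻¹ : ℝ):ℂ)) ^ (2*(k:ℂ)+p+1)
        = ((y/2:ℝ):ℂ) ^ (2*(k:ℂ)+p+1) * ((U:ℝ):ℂ) ^ (-(2*(k:ℂ)+p+1)) := by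
      rw [Complex.mul_cpow_ofReal_nonneg (by positivity) (by positivity),
        Complex.ofReal_inv, Complex.inv_cpow _ _ harg, ← Complex.cpow_neg]
    have hcomb : ((U:ℝ):ℂ)^(-l) * ((U:ℝ):ℂ)^(-(2*(k:ℂ)+p+1))
        = ((U:ℝ):ℂ)^(-(l+p+1+2*(k:ℂ))) := by
      rw [← Complex.cpow_add _ _ hUne]
      congr 1
      ring
    rw [hbase, hsplit]
    rw [hF]
    simp only []
    rw [← hcomb]
    unfold scoeff
    push_cast
    ring
  rw [setIntegral_congr_fun measurableSet_Ioi stepA]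
  -- Step B : swap integral and sum
  have hmeasF : ∀ k : ℕ, AEStronglyMeasurable (F k) (volume.restrict (Set.Ioi (0:ℝ))) := by
    intro k
    apply ContinuousOn.aestronglyMeasurable ?_ measurableSet_Ioi
    apply ContinuousOn.mul continuousOn_const
    apply ContinuousOn.mul
    · exact ContinuousOn.cpow_const Complex.continuous_ofReal.continuousOn
        (fun x hx => Complex.ofReal_mem_slitPlane.2 hx)
    · exact ContinuousOn.cpow_const
        (Complex.continuous_ofReal.comp (u_cont a)).continuousOn
        (fun x hx => Complex.ofReal_mem_slitPlane.2 (u_pos ha hx))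
  set r : ℝ := (l+p).re + 1 with hr
  have hmr : m.re < r := by rw [hr]; exact hlm
  have hint : IntegrableOn
      (fun x : ℝ => x ^ (m.re-1) * (x + a + Real.sqrt (x^2 + 2*a*x)) ^ (-r))
      (Set.Ioi (0:ℝ)) := integrable_kernel ha hm hmr
  have hIG : (∫⁻ x in Set.Ioi (0:ℝ),
      ENNReal.ofReal (x ^ (m.re-1) * (x + a + Real.sqrt (x^2 + 2*a*x)) ^ (-r))) < ⊤ :=
    hint.lintegral_lt_top
  have hQnn : ∀ k : ℕ, 0 ≤ ‖scoeff p b c y k‖ * ((a^2)⁻¹)^k := by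
    intro k; positivity
  have hsumQ : Summable (fun k => ‖scoeff p b c y k‖ * ((a^2)⁻¹)^k) :=
    summable_scoeff p b c hy (by positivity)
  have hbound : ∀ k : ℕ, (∫⁻ x in Set.Ioi (0:ℝ), ‖F k x‖₊)
      ≤ ENNReal.ofReal (‖scoeff p b c y k‖ * ((a^2)⁻¹)^k) *
        ∫⁻ x in Set.Ioi (0:ℝ),
          ENNReal.ofReal (x ^ (m.re-1) * (x + a + Real.sqrt (x^2 + 2*a*x)) ^ (-r)) := by
    intro k
    rw [← lintegral_const_mul' _ _ ENNReal.ofReal_ne_top]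
    apply lintegral_mono_ae
    filter_upwards [ae_restrict_mem measurableSet_Ioi] with x hx
    rw [Set.mem_Ioi] at hx
    simp only [hF]
    have hU : 0 < x + a + Real.sqrt (x^2 + 2*a*x) := u_pos ha hx
    set U : ℝ := x + a + Real.sqrt (x^2 + 2*a*x) with hUdef
    rw [← enorm_eq_nnnorm, ← ofReal_norm, ← ENNReal.ofReal_mul (by positivity)]
    apply ENNReal.ofReal_le_ofReal
    have hnorm : ‖scoeff p b c y k *
          ((x:ℂ)^(m-1) * ((U:ℝ):ℂ)^(-(l+p+1+2*(k:ℂ))))‖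
        = ‖scoeff p b c y k‖ * (x ^ (m.re-1) * U ^ (-(r + 2*(k:ℝ)))) := by
      rw [norm_mul, norm_mul,
        Complex.norm_cpow_eq_rpow_re_of_pos hx,
        Complex.norm_cpow_eq_rpow_re_of_pos hU,
        show (m-1).re = m.re - 1 by simp [Complex.sub_re],
        show (-(l+p+1+2*(k:ℂ))).re = -(r + 2*(k:ℝ)) by
          rw [hr]
          simp only [Complex.neg_re, Complex.add_re, Complex.one_re, Complex.mul_re,
            Complex.re_ofNat, Complex.im_ofNat, Complex.natCast_re, Complex.natCast_im]
          ring]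
    rw [hnorm]
    have hsplitU : U ^ (-(r + 2*(k:ℝ))) = U ^ (-r) * U ^ (-(2*(k:ℝ))) := by
      rw [← Real.rpow_add hU]; ring_nf
    have hUa : U ^ (-(2*(k:ℝ))) ≤ ((a^2)⁻¹)^k := by
      have h1 : U ^ (-(2*(k:ℝ))) ≤ a ^ (-(2*(k:ℝ))) :=
        Real.rpow_le_rpow_of_nonpos ha (u_lb ha hx)
          (neg_nonpos.2 (by positivity))
      have h2 : a ^ (-(2*(k:ℝ))) = ((a^2)⁻¹)^k := by
        rw [Real.rpow_neg ha.le, show (2*(k:ℝ)) = ((2*k : ℕ):ℝ) by push_cast; ring,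
          Real.rpow_natCast, pow_mul, ← inv_pow]
      linarith
    have base_nn : 0 ≤ ‖scoeff p b c y k‖ * (x ^ (m.re-1) * U ^ (-r)) := by positivity
    calc ‖scoeff p b c y k‖ * (x ^ (m.re-1) * U ^ (-(r + 2*(k:ℝ))))
        = (‖scoeff p b c y k‖ * (x ^ (m.re-1) * U ^ (-r))) * U ^ (-(2*(k:ℝ))) := by
          rw [hsplitU]; ring
      _ ≤ (‖scoeff p b c y k‖ * (x ^ (m.re-1) * U ^ (-r))) * ((a^2)⁻¹)^k :=
          mul_le_mul_of_nonneg_left hUa base_nn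
      _ = ‖scoeff p b c y k‖ * ((a^2)⁻¹)^k * (x ^ (m.re-1) * U ^ (-r)) := by ring
  have hfin : (∑' k : ℕ, ∫⁻ x in Set.Ioi (0:ℝ), ‖F k x‖₊) ≠ ⊤ := by
    apply ne_of_lt
    calc (∑' k : ℕ, ∫⁻ x in Set.Ioi (0:ℝ), ‖F k x‖₊)
        ≤ ∑' k : ℕ, ENNReal.ofReal (‖scoeff p b c y k‖ * ((a^2)⁻¹)^k) *
            ∫⁻ x in Set.Ioi (0:ℝ),
              ENNReal.ofReal (x ^ (m.re-1) * (x + a + Real.sqrt (x^2 + 2*a*x)) ^ (-r)) :=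
          ENNReal.tsum_le_tsum hbound
      _ = (∑' k : ℕ, ENNReal.ofReal (‖scoeff p b c y k‖ * ((a^2)⁻¹)^k)) *
            ∫⁻ x in Set.Ioi (0:ℝ),
              ENNReal.ofReal (x ^ (m.re-1) * (x + a + Real.sqrt (x^2 + 2*a*x)) ^ (-r)) :=
          ENNReal.tsum_mul_right
      _ < ⊤ := by
          apply ENNReal.mul_lt_top ?_ hIG
          rw [← ENNReal.ofReal_tsum_of_nonneg hQnn hsumQ]
          exact ENNReal.ofReal_lt_top
  rw [integral_tsum hmeasF hfin]
  -- Step C : evaluate each integral by the Oberhettinger formula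
  apply tsum_congr
  intro k
  rw [hF]
  simp only []
  rw [MeasureTheory.integral_const_mul]
  have hρre : m.re < (l+p+1+2*(k:ℂ)).re := by
    have hk : (0:ℝ) ≤ (k:ℝ) := Nat.cast_nonneg k
    have hlm2 : m.re < (l+p).re + 1 := by rw [← hr]; exact hlm
    simp only [Complex.add_re, Complex.one_re, Complex.mul_re, Complex.re_ofNat,
      Complex.im_ofNat, Complex.natCast_re, Complex.natCast_im] at hlm2 ⊢
    nlinarith
  rw [oberhettinger ha hm hρre]
  unfold scoeff
  ring
end

section
/- For real a > 0, y > 0 and complex b, c, p, λ, μ with Re(μ + p) > -1 and Re(λ) > Re(μ), the integral ∫₀^∞ x^{μ-1} (x + a + √(x² + 2ax))^{-λ} W_{p,b,c}(x y / (x + a + √(x² + 2ax))) dx equals the sum Σ_{k=0}^∞ [(-c)^k (y/2)^{2k+p+1} / (Γ(k + 3/2) Γ(k + p + (b+2)/2))] · ∫₀^∞ x^{μ+p+2k} (x + a + √(x² + 2ax))^{-(λ+p+1+2k)} dx, and each inner integral equals 2(λ+p+1+2k) a^{-(λ+p+1+2k)} (a/2)^{μ+p+1+2k} Γ(2μ+2p+2+4k)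 Γ(λ-μ) / Γ(1+λ+μ+2p+2+4k). -/
open MeasureTheory Complex Set
open scoped ENNReal NNReal
set_option maxHeartbeats 2000000

noncomputable def psi (a u : ℝ) : ℝ := a * (1 - u) ^ 2 / (2 * u)

lemma psi_deriv {a u : ℝ} (hu : u ∈ Ioo (0:ℝ) 1) :
    HasDerivWithinAt (psi a) (-(a * (1 - u ^ 2) / (2 * u ^ 2))) (Ioo (0:ℝ) 1) u := by
  have hu0 : u ≠ 0 := ne_of_gt hu.1
  have h : HasDerivAt (psi a) (-(a * (1 - u ^ 2) / (2 * u ^ 2))) u := by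
    have h1 : HasDerivAt (fun u : ℝ => a * (1 - u) ^ 2) (a * (2 * (1 - u) * (-1))) u := by
      have := (((hasDerivAt_id u).const_sub 1).pow 2).const_mul a
      simpa using this
    have h2 : HasDerivAt (fun u : ℝ => 2 * u) 2 u := by
      simpa using (hasDerivAt_id u).const_mul 2
    have := h1.div h2 (by simpa using hu0)
    have hfeq : psi a = (fun u : ℝ => a * (1 - u) ^ 2) / fun u : ℝ => 2 * u := by funext v; rfl
    rw [hfeq]
    exact this.congr_deriv (by field_simp; ring)
  exact h.hasDerivWithinAt

lemma psi_pos {a u : ℝ} (ha : 0 < a) (hu : u ∈ Ioo (0:ℝ) 1) : 0 < psi a u := by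
  have h1 : (0:ℝ) < 1 - u := by linarith [hu.2]
  have := hu.1
  unfold psi; positivity

lemma psi_image {a : ℝ} (ha : 0 < a) : psi a '' Ioo (0:ℝ) 1 = Ioi (0:ℝ) := by
  apply Subset.antisymm
  · rintro x ⟨u, hu, rfl⟩; exact psi_pos ha hu
  · rintro x (hx : 0 < x)
    have hr0 : (0:ℝ) ≤ x ^ 2 + 2 * a * x := by positivity
    set r := Real.sqrt (x ^ 2 + 2 * a * x) with hrdef
    have hr2 : r ^ 2 = x ^ 2 + 2 * a * x := Real.sq_sqrt hr0
    have hrpos : 0 < r := Real.sqrt_pos.mpr (by positivity)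
    set t := x + a + r with htdef
    have hta : a < t := by nlinarith
    have ht0 : 0 < t := lt_trans ha hta
    refine ⟨a / t, ⟨by positivity, by rw [div_lt_one ht0]; exact hta⟩, ?_⟩
    unfold psi
    rw [div_eq_iff (by positivity)]
    have key : (t - a) ^ 2 = 2 * x * t := by nlinarith [hr2]
    have h3 : a * (1 - a / t) ^ 2 * t ^ 2 = x * (2 * (a / t)) * t ^ 2 := by
      have e1 : a * (1 - a / t) ^ 2 * t ^ 2 = a * (t - a) ^ 2 := by field_simp
      have e2 : x * (2 * (a / t)) * t ^ 2 = 2 * a * x * t := by field_simp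
      rw [e1, e2]; linear_combination a * key
    exact mul_right_cancel₀ (pow_ne_zero 2 ht0.ne') h3

lemma psi_inj {a : ℝ} (ha : 0 < a) : InjOn (psi a) (Ioo (0:ℝ) 1) := by
  rintro u ⟨hu0, hu1⟩ v ⟨hv0, hv1⟩ h
  unfold psi at h
  have h' : a * (1 - u) ^ 2 * (2 * v) = a * (1 - v) ^ 2 * (2 * u) := by
    field_simp at h
    linear_combination (2 * a) * h
  have h3 : (v - u) * (1 - u * v) = 0 := by
    have h4 : a * 2 * ((v - u) * (1 - u * v)) = 0 := by linear_combination h'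
    have := mul_eq_zero.mp h4
    rcases this with h5 | h5
    · exact absurd h5 (by positivity)
    · exact h5
  have huv : u * v < 1 := by nlinarith
  rcases mul_eq_zero.mp h3 with h5 | h5
  · linarith
  · linarith

lemma psi_T {a u : ℝ} (ha : 0 < a) (hu : u ∈ Ioo (0:ℝ) 1) :
    psi a u + a + Real.sqrt ((psi a u) ^ 2 + 2 * a * (psi a u)) = a / u := by
  obtain ⟨hu0, hu1⟩ := hu
  have h1u : (0:ℝ) < 1 - u := by linarith
  have h1u' : (0:ℝ) < 1 - u ^ 2 := by nlinarith
  have hs : (psi a u) ^ 2 + 2 * a * (psi a u) = (a * (1 - u ^ 2) / (2 * u)) ^ 2 := by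
    unfold psi; field_simp; ring
  rw [hs, Real.sqrt_sq (by positivity)]
  unfold psi; field_simp; ring

lemma Hmul {x z : ℝ} (hx : 0 ≤ x) (hz : 0 ≤ z) (r : ℂ) :
    ((x * z : ℝ) : ℂ) ^ r = (x : ℂ) ^ r * (z : ℂ) ^ r := by
  rw [Complex.ofReal_mul]; exact Complex.mul_cpow_ofReal_nonneg hx hz r

lemma Hinv {z : ℝ} (hz : 0 < z) (r : ℂ) :
    ((z⁻¹ : ℝ) : ℂ) ^ r = ((z : ℂ) ^ r)⁻¹ := by
  rw [Complex.ofReal_inv]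
  exact Complex.inv_cpow _ _ (by
    rw [Complex.arg_ofReal_of_nonneg hz.le]; exact Real.pi_ne_zero.symm)

lemma Hdiv {x z : ℝ} (hx : 0 ≤ x) (hz : 0 < z) (r : ℂ) :
    ((x / z : ℝ) : ℂ) ^ r = (x : ℂ) ^ r / (z : ℂ) ^ r := by
  rw [div_eq_mul_inv, Hmul hx (by positivity) r, Hinv hz r, div_eq_mul_inv]

lemma Hne {x : ℝ} (hx : 0 < x) (r : ℂ) : (x : ℂ) ^ r ≠ 0 := by
  simp [Complex.cpow_eq_zero_iff, Complex.ofReal_ne_zero, hx.ne']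

lemma Hadd {x : ℝ} (hx : 0 < x) (r s : ℂ) :
    (x : ℂ) ^ (r + s) = (x : ℂ) ^ r * (x : ℂ) ^ s :=
  Complex.cpow_add _ _ (by exact_mod_cast hx.ne')

lemma Hsq {x : ℝ} (hx : 0 < x) (r : ℂ) :
    ((x ^ 2 : ℝ) : ℂ) ^ r = (x : ℂ) ^ (2 * r) := by
  rw [sq, Hmul hx.le hx.le r, ← Hadd hx, two_mul]

lemma key_pt (a : ℝ) (ha : 0 < a) (mu la : ℂ) {u : ℝ} (hu : u ∈ Ioo (0:ℝ) 1) :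
    |(-(a * (1 - u ^ 2) / (2 * u ^ 2)))| •
      (((psi a u : ℝ) : ℂ) ^ (mu - 1) *
        ((psi a u + a + Real.sqrt ((psi a u) ^ 2 + 2 * a * (psi a u)) : ℝ) : ℂ) ^ (-la)) =
    ((a : ℂ) ^ (mu - la) * (2 : ℂ) ^ (-mu)) *
      ((u : ℂ) ^ (la - mu - 1) * (1 - (u : ℂ)) ^ (2 * mu - 1) +
        (u : ℂ) ^ (la - mu + 1 - 1) * (1 - (u : ℂ)) ^ (2 * mu - 1)) := by
  obtain ⟨hu0, hu1⟩ := hu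
  have h1u : (0:ℝ) < 1 - u := by linarith
  rw [psi_T ha ⟨hu0, hu1⟩]
  have habs : |(-(a * (1 - u ^ 2) / (2 * u ^ 2)))| = a * ((1 - u) * (1 + u)) / (2 * u ^ 2) := by
    have h1u2 : (0:ℝ) < 1 - u ^ 2 := by nlinarith
    rw [abs_neg, abs_of_pos (by positivity)]
    ring
  rw [habs, Complex.real_smul]
  rw [show psi a u = a * (1 - u) ^ 2 / (2 * u) from rfl]
  rw [Hdiv (by positivity) (by positivity) (mu - 1), Hmul ha.le (by positivity) (mu - 1),
    Hsq h1u (mu - 1), Hmul (by norm_num : (0:ℝ) ≤ 2) hu0.le (mu - 1),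
    Hdiv ha.le hu0 (-la)]
  push_cast
  have hac : (a : ℂ) ≠ 0 := by exact_mod_cast ha.ne'
  have huc : (u : ℂ) ≠ 0 := by exact_mod_cast hu0.ne'
  have h1uc : (1 : ℂ) - (u : ℂ) ≠ 0 := sub_ne_zero.mpr (by exact_mod_cast hu1.ne')
  have h2c : (2 : ℂ) ≠ 0 := two_ne_zero
  rw [show la - mu + 1 - 1 = la - mu by ring]
  rw [show (2:ℂ) * mu - 1 = 2 * (mu - 1) + 1 by ring, Complex.cpow_add _ _ h1uc]
  rw [Complex.cpow_sub _ _ hac, Complex.cpow_sub _ _ h2c,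
    Complex.cpow_sub _ _ huc, Complex.cpow_sub _ _ huc, Complex.cpow_sub _ _ huc,
    Complex.cpow_sub _ _ hac, Complex.cpow_neg, Complex.cpow_neg, Complex.cpow_neg,
    Complex.cpow_one, Complex.cpow_one, Complex.cpow_one, Complex.cpow_one]
  have hA := Hne ha (mu)
  have hA' := Hne ha (la)
  have hU := Hne hu0 (mu)
  have hU' := Hne hu0 (la)
  push_cast at hA hA' hU hU'
  have h2 : (2:ℂ) ^ mu ≠ 0 := by simp [Complex.cpow_eq_zero_iff]
  have hV : ((1:ℂ) - (u:ℂ)) ^ (2 * (mu - 1)) ≠ 0 := by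
    simp [Complex.cpow_eq_zero_iff, h1uc]
  rw [inv_div_inv, ← div_eq_mul_inv]
  set A := (a:ℂ) ^ mu with hAdef
  set B := (a:ℂ) ^ la with hBdef
  set C := (2:ℂ) ^ mu with hCdef
  set D := (u:ℂ) ^ mu with hDdef
  set E := (u:ℂ) ^ la with hEdef
  set V := ((1:ℂ) - (u:ℂ)) ^ (2 * (mu - 1)) with hVdef
  field_simp


lemma obh (a : ℝ) (ha : 0 < a) (mu la : ℂ) (h1 : 0 < mu.re) (h2 : mu.re < la.re) :
    IntegrableOn (fun x : ℝ => (x : ℂ) ^ (mu - 1) *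
      ((x + a + Real.sqrt (x ^ 2 + 2 * a * x) : ℝ) : ℂ) ^ (-la)) (Set.Ioi 0) ∧
    ∫ x in Set.Ioi (0:ℝ), (x : ℂ) ^ (mu - 1) *
        ((x + a + Real.sqrt (x ^ 2 + 2 * a * x) : ℝ) : ℂ) ^ (-la) =
      2 * la * (a : ℂ) ^ (-la) * ((a : ℂ) / 2) ^ mu * Complex.Gamma (2 * mu) *
        Complex.Gamma (la - mu) / Complex.Gamma (1 + la + mu) := by
  have hac : (a : ℂ) ≠ 0 := by exact_mod_cast ha.ne'
  set g : ℝ → ℂ := fun x => (x : ℂ) ^ (mu - 1) *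
      ((x + a + Real.sqrt (x ^ 2 + 2 * a * x) : ℝ) : ℂ) ^ (-la) with hg
  have hder : ∀ u ∈ Set.Ioo (0:ℝ) 1, HasDerivWithinAt (psi a)
      ((fun u => -(a * (1 - u ^ 2) / (2 * u ^ 2))) u) (Set.Ioo 0 1) u := fun u hu => psi_deriv hu
  have hinj := psi_inj ha
  have himg := psi_image ha
  have hpt : ∀ u ∈ Set.Ioo (0:ℝ) 1,
      |(fun u => -(a * (1 - u ^ 2) / (2 * u ^ 2))) u| • g (psi a u) =
      ((a:ℂ) ^ (mu - la) * (2:ℂ) ^ (-mu)) *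
        ((u:ℂ) ^ (la - mu - 1) * (1 - (u:ℂ)) ^ (2 * mu - 1) +
          (u:ℂ) ^ (la - mu + 1 - 1) * (1 - (u:ℂ)) ^ (2 * mu - 1)) := fun u hu =>
    key_pt a ha mu la hu
  have hs : 0 < (la - mu).re := by rw [Complex.sub_re]; linarith
  have hs1 : 0 < (la - mu + 1).re := by rw [Complex.add_re, Complex.sub_re, Complex.one_re]; linarith
  have hv : 0 < (2 * mu).re := by
    have : (2 * mu).re = 2 * mu.re := by simp [Complex.mul_re]
    rw [this]; linarith
  have hb1 := Complex.betaIntegral_convergent hs hv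
  have hb2 := Complex.betaIntegral_convergent hs1 hv
  have hio1 : IntegrableOn (fun x : ℝ => (x:ℂ) ^ (la - mu - 1) * (1 - (x:ℂ)) ^ (2 * mu - 1))
      (Set.Ioo 0 1) :=
    ((intervalIntegrable_iff_integrableOn_Ioc_of_le zero_le_one).mp hb1).mono_set
      Set.Ioo_subset_Ioc_self
  have hio2 : IntegrableOn (fun x : ℝ => (x:ℂ) ^ (la - mu + 1 - 1) * (1 - (x:ℂ)) ^ (2 * mu - 1))
      (Set.Ioo 0 1) :=
    ((intervalIntegrable_iff_integrableOn_Ioc_of_le zero_le_one).mp hb2).mono_set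
      Set.Ioo_subset_Ioc_self
  have hio : IntegrableOn (fun u : ℝ => ((a:ℂ) ^ (mu - la) * (2:ℂ) ^ (-mu)) *
      ((u:ℂ) ^ (la - mu - 1) * (1 - (u:ℂ)) ^ (2 * mu - 1) +
        (u:ℂ) ^ (la - mu + 1 - 1) * (1 - (u:ℂ)) ^ (2 * mu - 1))) (Set.Ioo 0 1) :=
    (hio1.add hio2).const_mul _
  have hiff := integrableOn_image_iff_integrableOn_abs_deriv_smul measurableSet_Ioo hder hinj g
  have hInt : IntegrableOn g (Set.Ioi 0) := by
    rw [← himg]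
    exact hiff.mpr (hio.congr_fun (fun u hu => (hpt u hu).symm) measurableSet_Ioo)
  refine ⟨hInt, ?_⟩
  have hIoo1 : ∫ u in Set.Ioo (0:ℝ) 1, (u:ℂ) ^ (la - mu - 1) * (1 - (u:ℂ)) ^ (2 * mu - 1) =
      Complex.betaIntegral (la - mu) (2 * mu) := by
    rw [Complex.betaIntegral, intervalIntegral.integral_of_le zero_le_one,
      integral_Ioc_eq_integral_Ioo]
  have hIoo2 : ∫ u in Set.Ioo (0:ℝ) 1, (u:ℂ) ^ (la - mu + 1 - 1) * (1 - (u:ℂ)) ^ (2 * mu - 1) =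
      Complex.betaIntegral (la - mu + 1) (2 * mu) := by
    rw [Complex.betaIntegral, intervalIntegral.integral_of_le zero_le_one,
      integral_Ioc_eq_integral_Ioo]
  have hI : ∫ x in Set.Ioi (0:ℝ), g x = ((a:ℂ) ^ (mu - la) * (2:ℂ) ^ (-mu)) *
      (Complex.betaIntegral (la - mu) (2 * mu) + Complex.betaIntegral (la - mu + 1) (2 * mu)) := by
    rw [← himg, integral_image_eq_integral_abs_deriv_smul measurableSet_Ioo hder hinj g,
      setIntegral_congr_fun measurableSet_Ioo hpt, integral_const_mul,
      integral_add hio1 hio2, hIoo1, hIoo2]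
  -- Gamma facts
  have hp : 0 < (la + mu).re := by rw [Complex.add_re]; linarith
  have hp0 : la + mu ≠ 0 := fun h => by rw [h] at hp; simp at hp
  have hs0 : la - mu ≠ 0 := fun h => by rw [h] at hs; simp at hs
  have hGp : Complex.Gamma (la + mu) ≠ 0 := Complex.Gamma_ne_zero_of_re_pos hp
  have hβ1 : Complex.betaIntegral (la - mu) (2 * mu) =
      Complex.Gamma (la - mu) * Complex.Gamma (2 * mu) / Complex.Gamma (la + mu) := by
    have h := Complex.Gamma_mul_Gamma_eq_betaIntegral hs hv
    rw [show la - mu + 2 * mu = la + mu by ring] at h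
    exact (eq_div_iff hGp).mpr (by linear_combination -h)
  have hβ2 : Complex.betaIntegral (la - mu + 1) (2 * mu) =
      (la - mu) * Complex.Gamma (la - mu) * Complex.Gamma (2 * mu) /
        ((la + mu) * Complex.Gamma (la + mu)) := by
    have h := Complex.Gamma_mul_Gamma_eq_betaIntegral hs1 hv
    rw [show la - mu + 1 + 2 * mu = la + mu + 1 by ring, Complex.Gamma_add_one _ hp0,
      Complex.Gamma_add_one _ hs0] at h
    exact (eq_div_iff (mul_ne_zero hp0 hGp)).mpr (by linear_combination -h)
  have hkey : Complex.betaIntegral (la - mu) (2 * mu) +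
      Complex.betaIntegral (la - mu + 1) (2 * mu) =
      2 * la * Complex.Gamma (2 * mu) * Complex.Gamma (la - mu) /
        ((la + mu) * Complex.Gamma (la + mu)) := by
    rw [hβ1, hβ2]
    field_simp
    ring
  rw [hI, hkey]
  rw [show (1:ℂ) + la + mu = la + mu + 1 by ring, Complex.Gamma_add_one _ hp0]
  rw [Complex.cpow_sub _ _ hac, Complex.cpow_neg, Complex.cpow_neg,
    show ((a:ℂ)/2) = ((a / 2 : ℝ) : ℂ) by push_cast; ring,
    Hdiv ha.le two_pos mu]
  push_cast
  rw [div_eq_mul_inv ((a:ℂ) ^ mu)]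
  ring

lemma sumD (y : ℝ) (hy : 0 < y) (b c p : ℂ) :
    Summable (fun k : ℕ => (y/2) ^ (p.re+1) * ((y/4)^2 * ‖c‖) ^ k /
      (‖Complex.Gamma ((k:ℂ) + 3/2)‖ *
        ‖Complex.Gamma ((k:ℂ) + p + (b+2)/2)‖)) := by
  set R : ℝ := (y/4)^2 * ‖c‖ with hR
  have hR0 : (0:ℝ) ≤ R := by positivity
  set c₀ : ℝ := (y/2) ^ (p.re+1) with hc₀
  have hc₀0 : (0:ℝ) ≤ c₀ := Real.rpow_nonneg (by positivity) _
  set wre : ℝ := (p + (b+2)/2).re with hwre_def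
  set D : ℕ → ℝ := fun k => c₀ * R ^ k /
      (‖Complex.Gamma ((k:ℂ) + 3/2)‖ *
        ‖Complex.Gamma ((k:ℂ) + p + (b+2)/2)‖) with hD
  show Summable D
  apply summable_of_ratio_norm_eventually_le (r := 1/2) (by norm_num)
  filter_upwards [Filter.eventually_ge_atTop (⌈2*R + |wre| + 2⌉₊)] with k hk
  have hkR : 2*R + |wre| + 2 ≤ (k:ℝ) := le_trans (Nat.le_ceil _) (Nat.cast_le.mpr hk)
  have hre : ((k:ℂ) + p + (b+2)/2).re = (k:ℝ) + wre := by
    simp [Complex.add_re, Complex.natCast_re, hwre_def]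
    ring
  have hwre : (0:ℝ) < (k:ℝ) + wre := by cases abs_cases wre <;> linarith
  have hz : ((k:ℂ) + p + (b+2)/2) ≠ 0 := by
    intro h
    rw [h] at hre
    simp only [Complex.zero_re] at hre
    linarith
  have hz1 : ((k:ℂ) + 3/2) ≠ 0 := by
    intro h
    have := congrArg Complex.re h
    simp only [Complex.add_re, Complex.natCast_re, Complex.zero_re] at this
    norm_num at this
    linarith [this, Nat.cast_nonneg (α := ℝ) k]
  have hg1 : Complex.Gamma (((k+1 : ℕ):ℂ) + 3/2) = ((k:ℂ) + 3/2) * Complex.Gamma ((k:ℂ) + 3/2) := by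
    rw [show (((k+1:ℕ)):ℂ) + 3/2 = ((k:ℂ) + 3/2) + 1 by push_cast; ring,
      Complex.Gamma_add_one _ hz1]
  have hg2 : Complex.Gamma (((k+1 : ℕ):ℂ) + p + (b+2)/2) =
      ((k:ℂ) + p + (b+2)/2) * Complex.Gamma ((k:ℂ) + p + (b+2)/2) := by
    rw [show (((k+1:ℕ)):ℂ) + p + (b+2)/2 = ((k:ℂ) + p + (b+2)/2) + 1 by push_cast; ring,
      Complex.Gamma_add_one _ hz]
  have habs32 : ‖(k:ℂ) + 3/2‖ = (k:ℝ) + 3/2 := by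
    rw [show ((k:ℂ) + 3/2) = (((k:ℝ) + 3/2 : ℝ):ℂ) by push_cast; ring, Complex.norm_real, Real.norm_eq_abs,
      _root_.abs_of_pos (by positivity)]
  have hDk0 : (0:ℝ) ≤ D k := by
    rw [hD]; positivity
  have hDk10 : (0:ℝ) ≤ D (k+1) := by
    rw [hD]; positivity
  rw [Real.norm_eq_abs, Real.norm_eq_abs, _root_.abs_of_nonneg hDk0, _root_.abs_of_nonneg hDk10]
  by_cases hΓ2 : ‖Complex.Gamma ((k:ℂ) + p + (b+2)/2)‖ = 0
  · have h0 : D (k+1) = 0 := by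
      rw [hD]
      simp only [hg2, norm_mul, hΓ2, mul_zero, div_zero]
    have h0' : D k = 0 := by
      rw [hD]
      simp [hΓ2]
    rw [h0, h0']; norm_num
  · have e : D (k+1) = D k * (R / (((k:ℝ) + 3/2) * ‖(k:ℂ) + p + (b+2)/2‖)) := by
      rw [hD]
      simp only [hg1, hg2, norm_mul, habs32]
      have hΓ1 : ‖Complex.Gamma ((k:ℂ) + 3/2)‖ ≠ 0 := by
        simp only [ne_eq, norm_eq_zero]
        exact Complex.Gamma_ne_zero_of_re_pos (by
          simp only [Complex.add_re, Complex.natCast_re]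
          norm_num
          positivity)
      have habsz : ‖(k:ℂ) + p + (b+2)/2‖ ≠ 0 := by
        simp [norm_eq_zero, hz]
      field_simp
      ring
    rw [e]
    have hle : R / (((k:ℝ) + 3/2) * ‖(k:ℂ) + p + (b+2)/2‖) ≤ 1/2 := by
      have h1 : (k:ℝ) + wre ≤ ‖(k:ℂ) + p + (b+2)/2‖ := by
        have := Complex.re_le_norm ((k:ℂ) + p + (b+2)/2)
        rwa [hre] at this
      have h2 : (1:ℝ) ≤ (k:ℝ) + 3/2 := by
        have : (0:ℝ) ≤ (k:ℝ) := Nat.cast_nonneg k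
        linarith
      have h3 : 2*R + 2 ≤ ‖(k:ℂ) + p + (b+2)/2‖ := by
        cases abs_cases wre <;> linarith
      have h4 : 2*R ≤ ((k:ℝ) + 3/2) * ‖(k:ℂ) + p + (b+2)/2‖ := by
        nlinarith
      rw [div_le_iff₀ (by nlinarith)]
      linarith
    calc D k * (R / (((k:ℝ) + 3/2) * ‖(k:ℂ) + p + (b+2)/2‖)) ≤ D k * (1/2) :=
          mul_le_mul_of_nonneg_left hle hDk0
      _ = 1/2 * D k := by ring

lemma Tpos {a x : ℝ} (ha : 0 < a) (hx : 0 < x) :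
    0 < x + a + Real.sqrt (x ^ 2 + 2 * a * x) :=
  by positivity

lemma Tge {a x : ℝ} (ha : 0 < a) (hx : 0 < x) :
    2 * x ≤ x + a + Real.sqrt (x ^ 2 + 2 * a * x) := by
  have h1 := Real.sqrt_le_sqrt (show x ^ 2 ≤ x ^ 2 + 2 * a * x by nlinarith)
  rw [Real.sqrt_sq hx.le] at h1
  linarith

lemma aesm_aux (a y : ℝ) (ha : 0 < a) (hy : 0 < y) (r s q G Cc : ℂ) :
    AEStronglyMeasurable (fun x : ℝ => (x:ℂ) ^ r *
      ((x + a + Real.sqrt (x ^ 2 + 2 * a * x) : ℝ):ℂ) ^ s *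
      (Cc * ((x:ℂ) * (y:ℂ) / ((x + a + Real.sqrt (x ^ 2 + 2 * a * x) : ℝ):ℂ) / 2) ^ q / G))
      (volume.restrict (Set.Ioi 0)) := by
  apply ContinuousOn.aestronglyMeasurable _ measurableSet_Ioi
  intro x hx
  have hx' : (0:ℝ) < x := hx
  have hT : (0:ℝ) < x + a + Real.sqrt (x ^ 2 + 2 * a * x) := Tpos ha hx'
  have hTc : Continuous (fun x : ℝ => x + a + Real.sqrt (x ^ 2 + 2 * a * x)) := by
    continuity
  have hTne : ((x + a + Real.sqrt (x ^ 2 + 2 * a * x) : ℝ):ℂ) ≠ 0 := by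
    exact_mod_cast hT.ne'
  have c1 : ContinuousAt (fun x : ℝ => (x:ℂ) ^ r) x :=
    Complex.continuous_ofReal.continuousAt.cpow continuousAt_const
      (Complex.ofReal_mem_slitPlane.mpr hx')
  have cT : ContinuousAt (fun x : ℝ => ((x + a + Real.sqrt (x ^ 2 + 2 * a * x) : ℝ):ℂ)) x :=
    (Complex.continuous_ofReal.comp hTc).continuousAt
  have c2 : ContinuousAt (fun x : ℝ =>
      ((x + a + Real.sqrt (x ^ 2 + 2 * a * x) : ℝ):ℂ) ^ s) x :=
    cT.cpow continuousAt_const (Complex.ofReal_mem_slitPlane.mpr hT)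
  have cB : ContinuousAt (fun x : ℝ =>
      (x:ℂ) * (y:ℂ) / ((x + a + Real.sqrt (x ^ 2 + 2 * a * x) : ℝ):ℂ) / 2) x :=
    (((Complex.continuous_ofReal.continuousAt.mul continuousAt_const).div cT hTne).div_const 2)
  have hmem : ((x:ℂ) * (y:ℂ) / ((x + a + Real.sqrt (x ^ 2 + 2 * a * x) : ℝ):ℂ) / 2)
      ∈ Complex.slitPlane := by
    rw [show (x:ℂ) * (y:ℂ) / ((x + a + Real.sqrt (x ^ 2 + 2 * a * x) : ℝ):ℂ) / 2 =
      ((x * y / (x + a + Real.sqrt (x ^ 2 + 2 * a * x)) / 2 : ℝ):ℂ) by push_cast; ring]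
    exact Complex.ofReal_mem_slitPlane.mpr (by positivity)
  have c3 : ContinuousAt (fun x : ℝ =>
      ((x:ℂ) * (y:ℂ) / ((x + a + Real.sqrt (x ^ 2 + 2 * a * x) : ℝ):ℂ) / 2) ^ q) x :=
    cB.cpow continuousAt_const hmem
  exact (((c1.mul c2).mul ((continuousAt_const.mul c3).div_const G)).continuousWithinAt)

lemma normb (a y : ℝ) (ha : 0 < a) (hy : 0 < y) (c p l m : ℂ) (k : ℕ) {x : ℝ} (hx : 0 < x)
    (G : ℂ) :
    ‖(x:ℂ) ^ (m - 1) * ((x + a + Real.sqrt (x ^ 2 + 2 * a * x) : ℝ):ℂ) ^ (-l) *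
      ((-c) ^ k * ((x:ℂ) * (y:ℂ) / ((x + a + Real.sqrt (x ^ 2 + 2 * a * x) : ℝ):ℂ) / 2) ^
        (2 * (k:ℂ) + p + 1) / G)‖ ≤
    (y/2) ^ (p.re + 1) * ((y/4) ^ 2 * ‖c‖) ^ k / ‖G‖ *
      (x ^ (m.re + p.re) *
        (x + a + Real.sqrt (x ^ 2 + 2 * a * x)) ^ (-(l.re + p.re + 1))) := by
  set t : ℝ := x + a + Real.sqrt (x ^ 2 + 2 * a * x) with htdef
  have ht : (0:ℝ) < t := Tpos ha hx
  have ht2 : 2 * x ≤ t := Tge ha hx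
  set w : ℝ := x * (y/2) / t with hwdef
  have hw : (0:ℝ) < w := by positivity
  have hbase : (x:ℂ) * (y:ℂ) / ((t : ℝ):ℂ) / 2 = ((w : ℝ):ℂ) := by
    rw [hwdef]; push_cast; ring
  rw [hbase]
  rw [norm_mul, norm_mul, norm_div, norm_mul, norm_pow, norm_neg]
  rw [Complex.norm_cpow_eq_rpow_re_of_pos hx, Complex.norm_cpow_eq_rpow_re_of_pos ht,
    Complex.norm_cpow_eq_rpow_re_of_pos hw]
  have hre1 : (m - 1).re = m.re - 1 := by simp [Complex.sub_re]
  have hre2 : (-l).re = -l.re := by simp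
  have hre3 : (2 * (k:ℂ) + p + 1).re = 2 * (k:ℝ) + p.re + 1 := by
    simp [Complex.add_re, Complex.mul_re]
  rw [hre1, hre2, hre3]
  -- split the w-power
  have hsplit : w ^ (2 * (k:ℝ) + p.re + 1) = (w ^ 2) ^ k * w ^ (p.re + 1) := by
    rw [show 2 * (k:ℝ) + p.re + 1 = ((2 * k : ℕ) : ℝ) + (p.re + 1) by push_cast; ring,
      Real.rpow_add hw, Real.rpow_natCast, pow_mul]
  rw [hsplit]
  have hw4 : w ≤ y / 4 := by
    rw [hwdef, div_le_iff₀ ht]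
    nlinarith
  have hwsq : w ^ 2 ≤ (y/4) ^ 2 := by nlinarith
  have hwk : (w ^ 2) ^ k ≤ ((y/4) ^ 2) ^ k := pow_le_pow_left₀ (by positivity) hwsq k
  have hwp : w ^ (p.re + 1) = x ^ (p.re + 1) * (y/2) ^ (p.re + 1) * t ^ (-(p.re + 1)) := by
    rw [hwdef, Real.div_rpow (by positivity) ht.le, Real.mul_rpow hx.le (by positivity),
      Real.rpow_neg ht.le, div_eq_mul_inv]
  rw [hwp]
  have hxcomb : x ^ (m.re - 1) * x ^ (p.re + 1) = x ^ (m.re + p.re) := by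
    rw [← Real.rpow_add hx]; ring_nf
  have htcomb : t ^ (-l.re) * t ^ (-(p.re + 1)) = t ^ (-(l.re + p.re + 1)) := by
    rw [← Real.rpow_add ht]; ring_nf
  calc x ^ (m.re - 1) * t ^ (-l.re) *
        (‖c‖ ^ k * ((w ^ 2) ^ k * (x ^ (p.re + 1) * (y/2) ^ (p.re + 1) *
          t ^ (-(p.re + 1)))) / ‖G‖)
      = (x ^ (m.re + p.re) * t ^ (-(l.re + p.re + 1)) * (y/2) ^ (p.re + 1) *
          ‖c‖ ^ k / ‖G‖) * (w ^ 2) ^ k := by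
        rw [← hxcomb, ← htcomb]; ring
    _ ≤ (x ^ (m.re + p.re) * t ^ (-(l.re + p.re + 1)) * (y/2) ^ (p.re + 1) *
          ‖c‖ ^ k / ‖G‖) * ((y/4) ^ 2) ^ k := by
        apply mul_le_mul_of_nonneg_left hwk
        have h1 : (0:ℝ) ≤ x ^ (m.re + p.re) := Real.rpow_nonneg hx.le _
        have h2 : (0:ℝ) ≤ t ^ (-(l.re + p.re + 1)) := Real.rpow_nonneg ht.le _
        have h3 : (0:ℝ) ≤ (y/2) ^ (p.re + 1) := Real.rpow_nonneg (by positivity) _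
        positivity
    _ = (y/2) ^ (p.re + 1) * ((y/4) ^ 2 * ‖c‖) ^ k / ‖G‖ *
          (x ^ (m.re + p.re) * t ^ (-(l.re + p.re + 1))) := by
        rw [mul_pow]; ring
lemma key2 (a y : ℝ) (ha : 0 < a) (hy : 0 < y) (c p l m : ℂ) (k : ℕ) {x : ℝ} (hx : 0 < x)
    (G : ℂ) :
    (x:ℂ) ^ (m - 1) * ((x + a + Real.sqrt (x ^ 2 + 2 * a * x) : ℝ):ℂ) ^ (-l) *
      ((-c) ^ k * ((x:ℂ) * (y:ℂ) / ((x + a + Real.sqrt (x ^ 2 + 2 * a * x) : ℝ):ℂ) / 2) ^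
        (2 * (k:ℂ) + p + 1) / G) =
    ((-c) ^ k * ((y:ℂ) / 2) ^ (2 * (k:ℂ) + p + 1) / G) *
      ((x:ℂ) ^ (m + p + 2 * (k:ℂ)) *
        ((x + a + Real.sqrt (x ^ 2 + 2 * a * x) : ℝ):ℂ) ^ (-(l + p + 1 + 2 * (k:ℂ)))) := by
  set t : ℝ := x + a + Real.sqrt (x ^ 2 + 2 * a * x) with htdef
  have ht : (0:ℝ) < t := Tpos ha hx
  rw [show (x:ℂ) * (y:ℂ) / ((t : ℝ):ℂ) / 2 = ((x * (y/2) / t : ℝ):ℂ) by push_cast; ring,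
    Hdiv (by positivity) ht, Hmul hx.le (by positivity),
    show (((y/2 : ℝ)):ℂ) = (y:ℂ) / 2 by push_cast; ring]
  have e1 : (x:ℂ) ^ (m + p + 2 * (k:ℂ)) = (x:ℂ) ^ (m - 1) * (x:ℂ) ^ (2 * (k:ℂ) + p + 1) := by
    rw [← Hadd hx]; congr 1; ring
  have e2 : ((t:ℝ):ℂ) ^ (-(l + p + 1 + 2 * (k:ℂ))) =
      ((t:ℝ):ℂ) ^ (-l) * (((t:ℝ):ℂ) ^ (2 * (k:ℂ) + p + 1))⁻¹ := by
    rw [← Complex.cpow_neg, ← Hadd ht]; congr 1; ring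
  rw [e1, e2]
  ring

theorem integral_genStruve_oberhettinger₂ (a y : ℝ) (ha : 0 < a) (hy : 0 < y)
    (b c p l m : ℂ) (hmp : -1 < (m + p).re) (hlm : m.re < l.re) :
    (∫ x in Set.Ioi (0 : ℝ),
        (x : ℂ) ^ (m - 1) *
          ((x + a + Real.sqrt (x ^ 2 + 2 * a * x) : ℝ) : ℂ) ^ (-l) *
          genStruve p b c
            ((x : ℂ) * (y : ℂ) / ((x + a + Real.sqrt (x ^ 2 + 2 * a * x) : ℝ) : ℂ))) =
      (∑' k : ℕ,
        ((-c) ^ k * ((y : ℂ) / 2) ^ (2 * (k : ℂ) + p + 1) /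
            (Complex.Gamma ((k : ℂ) + 3 / 2) *
              Complex.Gamma ((k : ℂ) + p + (b + 2) / 2))) *
          ∫ x in Set.Ioi (0 : ℝ),
            (x : ℂ) ^ (m + p + 2 * (k : ℂ)) *
              ((x + a + Real.sqrt (x ^ 2 + 2 * a * x) : ℝ) : ℂ) ^
                (-(l + p + 1 + 2 * (k : ℂ)))) ∧
      ∀ k : ℕ,
        (∫ x in Set.Ioi (0 : ℝ),
            (x : ℂ) ^ (m + p + 2 * (k : ℂ)) *
              ((x + a + Real.sqrt (x ^ 2 + 2 * a * x) : ℝ) : ℂ) ^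
                (-(l + p + 1 + 2 * (k : ℂ)))) =
          2 * (l + p + 1 + 2 * (k : ℂ)) * (a : ℂ) ^ (-(l + p + 1 + 2 * (k : ℂ))) *
            ((a : ℂ) / 2) ^ (m + p + 1 + 2 * (k : ℂ)) *
            Complex.Gamma (2 * m + 2 * p + 2 + 4 * (k : ℂ)) * Complex.Gamma (l - m) /
            Complex.Gamma (1 + l + m + 2 * p + 2 + 4 * (k : ℂ)) := by
  constructor
  · -- part 1 : swap integral and sum
    set f : ℕ → ℝ → ℂ := fun k x => (x:ℂ) ^ (m - 1) *
        ((x + a + Real.sqrt (x ^ 2 + 2 * a * x) : ℝ):ℂ) ^ (-l) *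
        ((-c) ^ k * ((x:ℂ) * (y:ℂ) / ((x + a + Real.sqrt (x ^ 2 + 2 * a * x) : ℝ):ℂ) / 2) ^
          (2 * (k:ℂ) + p + 1) /
          (Complex.Gamma ((k:ℂ) + 3/2) * Complex.Gamma ((k:ℂ) + p + (b + 2)/2))) with hf
    have hfun : (fun x : ℝ => (x:ℂ) ^ (m - 1) *
        ((x + a + Real.sqrt (x ^ 2 + 2 * a * x) : ℝ):ℂ) ^ (-l) *
        genStruve p b c ((x:ℂ) * (y:ℂ) / ((x + a + Real.sqrt (x ^ 2 + 2 * a * x) : ℝ):ℂ))) =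
        (fun x => ∑' k, f k x) := by
      funext x
      rw [genStruve]
      exact (tsum_mul_left).symm
    have hmeas : ∀ k : ℕ, AEStronglyMeasurable (f k) (volume.restrict (Set.Ioi 0)) := fun k =>
      aesm_aux a y ha hy (m - 1) (-l) (2 * (k:ℂ) + p + 1) _ ((-c) ^ k)
    set B : ℝ → ℝ := fun x => x ^ (m.re + p.re) *
        (x + a + Real.sqrt (x ^ 2 + 2 * a * x)) ^ (-(l.re + p.re + 1)) with hB
    set D : ℕ → ℝ := fun k => (y/2) ^ (p.re + 1) * ((y/4) ^ 2 * ‖c‖) ^ k /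
        (‖Complex.Gamma ((k:ℂ) + 3/2)‖ *
          ‖Complex.Gamma ((k:ℂ) + p + (b + 2)/2)‖) with hD
    have hDsum : Summable D := sumD y hy b c p
    have hD0 : ∀ k, 0 ≤ D k := fun k => by
      rw [hD]
      have h := Real.rpow_nonneg (by positivity : (0:ℝ) ≤ y/2) (p.re + 1)
      positivity
    have h01 : 0 < (((m.re + p.re + 1 : ℝ)):ℂ).re := by
      rw [Complex.ofReal_re]
      rw [Complex.add_re] at hmp
      linarith
    have h02 : (((m.re + p.re + 1 : ℝ)):ℂ).re < (((l.re + p.re + 1 : ℝ)):ℂ).re := by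
      rw [Complex.ofReal_re, Complex.ofReal_re]; linarith
    obtain ⟨hg0int, -⟩ := obh a ha ((m.re + p.re + 1 : ℝ):ℂ) ((l.re + p.re + 1 : ℝ):ℂ) h01 h02
    have hBeq : ∀ x ∈ Set.Ioi (0:ℝ), ENNReal.ofReal (B x) =
        (‖(x:ℂ) ^ (((m.re + p.re + 1 : ℝ):ℂ) - 1) *
          ((x + a + Real.sqrt (x ^ 2 + 2 * a * x) : ℝ):ℂ) ^
            (-((l.re + p.re + 1 : ℝ):ℂ))‖₊ : ℝ≥0∞) := by
      intro x hx
      have hx' : (0:ℝ) < x := hx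
      have ht : (0:ℝ) < x + a + Real.sqrt (x ^ 2 + 2 * a * x) := Tpos ha hx'
      rw [← enorm_eq_nnnorm, ← ofReal_norm, norm_mul,
        Complex.norm_cpow_eq_rpow_re_of_pos hx', Complex.norm_cpow_eq_rpow_re_of_pos ht]
      rw [hB]
      norm_num [Complex.sub_re, Complex.ofReal_re, Complex.neg_re]
    have hL : (∫⁻ x in Set.Ioi (0:ℝ), ENNReal.ofReal (B x)) < ⊤ := by
      rw [setLIntegral_congr_fun measurableSet_Ioi hBeq]
      exact hg0int.2
    have hbound : ∀ k, (∫⁻ x in Set.Ioi (0:ℝ), ‖f k x‖₊) ≤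
        ENNReal.ofReal (D k) * ∫⁻ x in Set.Ioi (0:ℝ), ENNReal.ofReal (B x) := by
      intro k
      have hpt : ∀ x ∈ Set.Ioi (0:ℝ), (‖f k x‖₊ : ℝ≥0∞) ≤
          ENNReal.ofReal (D k) * ENNReal.ofReal (B x) := by
        intro x hx
        have hx' : (0:ℝ) < x := hx
        have h1 := normb a y ha hy c p l m k hx'
          (Complex.Gamma ((k:ℂ) + 3/2) * Complex.Gamma ((k:ℂ) + p + (b + 2)/2))
        rw [norm_mul (Complex.Gamma _)] at h1
        rw [← enorm_eq_nnnorm, ← ofReal_norm, ← ENNReal.ofReal_mul (hD0 k)]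
        refine ENNReal.ofReal_le_ofReal (le_trans h1 (le_of_eq ?_))
        rw [hD, hB]
      calc (∫⁻ x in Set.Ioi (0:ℝ), ‖f k x‖₊)
          ≤ ∫⁻ x in Set.Ioi (0:ℝ), ENNReal.ofReal (D k) * ENNReal.ofReal (B x) :=
            lintegral_mono_ae ((ae_restrict_iff' measurableSet_Ioi).mpr (ae_of_all _ hpt))
        _ = ENNReal.ofReal (D k) * ∫⁻ x in Set.Ioi (0:ℝ), ENNReal.ofReal (B x) :=
            lintegral_const_mul' _ _ ENNReal.ofReal_ne_top
    have htsum : (∑' k, ∫⁻ x in Set.Ioi (0:ℝ), ‖f k x‖₊) ≠ ⊤ := by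
      apply ne_of_lt
      calc (∑' k, ∫⁻ x in Set.Ioi (0:ℝ), ‖f k x‖₊)
          ≤ ∑' k, ENNReal.ofReal (D k) * ∫⁻ x in Set.Ioi (0:ℝ), ENNReal.ofReal (B x) :=
            ENNReal.tsum_le_tsum hbound
        _ = (∑' k, ENNReal.ofReal (D k)) * ∫⁻ x in Set.Ioi (0:ℝ), ENNReal.ofReal (B x) :=
            ENNReal.tsum_mul_right
        _ < ⊤ := by
            refine ENNReal.mul_lt_top ?_ hL
            rw [← ENNReal.ofReal_tsum_of_nonneg hD0 hDsum]
            exact ENNReal.ofReal_lt_top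
    rw [hfun, integral_tsum hmeas htsum]
    apply tsum_congr
    intro k
    rw [setIntegral_congr_fun measurableSet_Ioi
      (fun x hx => key2 a y ha hy c p l m k hx _), integral_const_mul]
  · -- part 2 : the inner Oberhettinger integrals
    intro k
    have hre1 : (m + p + 1 + 2 * (k:ℂ)).re = (m + p).re + 1 + 2 * (k:ℝ) := by
      simp [Complex.add_re, Complex.mul_re]
    have hre2 : (l + p + 1 + 2 * (k:ℂ)).re = l.re + p.re + 1 + 2 * (k:ℝ) := by
      simp [Complex.add_re, Complex.mul_re]
    have h1 : 0 < (m + p + 1 + 2 * (k:ℂ)).re := by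
      rw [hre1]
      have : (0:ℝ) ≤ (k:ℝ) := Nat.cast_nonneg k
      linarith
    have h2 : (m + p + 1 + 2 * (k:ℂ)).re < (l + p + 1 + 2 * (k:ℂ)).re := by
      rw [hre1, hre2, Complex.add_re]
      linarith
    obtain ⟨-, hval⟩ := obh a ha (m + p + 1 + 2 * (k:ℂ)) (l + p + 1 + 2 * (k:ℂ)) h1 h2
    rw [show m + p + 2 * (k:ℂ) = m + p + 1 + 2 * (k:ℂ) - 1 from by ring, hval,
      show 2 * (m + p + 1 + 2 * (k:ℂ)) = 2*m + 2*p + 2 + 4*(k:ℂ) from by ring,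
      show l + p + 1 + 2 * (k:ℂ) - (m + p + 1 + 2 * (k:ℂ)) = l - m from by ring,
      show 1 + (l + p + 1 + 2 * (k:ℂ)) + (m + p + 1 + 2 * (k:ℂ)) =
        1 + l + m + 2*p + 2 + 4*(k:ℂ) from by ring]
end
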